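/- arXiv:1712.04099 — 6 statements merged into one kernel-verified Lean document; each statement's English description precedes it below -/
import Mathlib

section
/- The kissing number in dimension 2 is exactly 6: the maximum number of points on the unit circle in ℝ² with pairwise Euclidean distance at least 1 is 6. -/
open Real

private noncomputable def kpt (a b : ℝ) : EuclideanSpace ℝ (Fin 2) := (WithLp.equiv 2 _).symm ![a,b]

private lemma kpt0 (a b : ℝ) : kpt a b 0 = a := rfl
private lemma kpt1 (a b : ℝ) : kpt a b 1 = b := rfl

private lemma kdist (x y : EuclideanSpace ℝ (Fin 2)) :
    dist x y = Real.sqrt ((x 0 - y 0)^2 + (x 1 - y 1)^2) := by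
  rw [EuclideanSpace.dist_eq, Fin.sum_univ_two, Real.dist_eq, Real.dist_eq, sq_abs, sq_abs]

private lemma knorm (a b : ℝ) : ‖kpt a b‖ = Real.sqrt (a^2+b^2) := by
  rw [EuclideanSpace.norm_eq, Fin.sum_univ_two]; simp [kpt]

private lemma kdist_cos (a b : ℝ) :
    dist (kpt (cos a) (sin a)) (kpt (cos b) (sin b)) = Real.sqrt (2 - 2 * cos (a - b)) := by
  rw [kdist, kpt0, kpt0, kpt1, kpt1]
  congr 1
  rw [Real.cos_sub]
  nlinarith [Real.sin_sq_add_cos_sq a, Real.sin_sq_add_cos_sq b]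

private lemma kge (a b : ℝ) (h : cos (a - b) ≤ 1/2) :
    1 ≤ dist (kpt (cos a) (sin a)) (kpt (cos b) (sin b)) := by
  rw [kdist_cos]
  exact Real.one_le_sqrt.mpr (by linarith)

private lemma kcos (d : ℝ) (h1 : π/3 ≤ d ∨ π/3 ≤ -d) (h2 : -(5*π/3) ≤ d ∧ d ≤ 5*π/3) :
    cos d ≤ 1/2 := by
  have habs1 : π/3 ≤ |d| := by rcases h1 with h | h; exacts [le_abs.mpr (Or.inl h), le_abs.mpr (Or.inr h)]
  have habs2 : |d| ≤ 5*π/3 := abs_le.mpr ⟨by linarith [h2.1], h2.2⟩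
  have hpi := Real.pi_pos
  rw [← Real.cos_abs]
  rcases le_or_gt |d| π with h | h
  · calc cos |d| ≤ cos (π/3) := by
          rcases eq_or_lt_of_le habs1 with he | hlt
          · rw [he]
          · exact le_of_lt (Real.cos_lt_cos_of_nonneg_of_le_pi (by positivity) h hlt)
      _ = 1/2 := Real.cos_pi_div_three
  · have : cos |d| = cos (2*π - |d|) := by rw [Real.cos_two_pi_sub]
    rw [this]
    calc cos (2*π - |d|) ≤ cos (π/3) := by
          rcases eq_or_lt_of_le (show π/3 ≤ 2*π - |d| by linarith) with he | hlt
          · rw [← he]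
          · exact le_of_lt (Real.cos_lt_cos_of_nonneg_of_le_pi (by positivity) (by linarith) hlt)
      _ = 1/2 := Real.cos_pi_div_three

private lemma kex : ∃ x : Fin 6 → EuclideanSpace ℝ (Fin 2),
    (∀ i, ‖x i‖ = 1) ∧ ∀ i j, i ≠ j → 1 ≤ dist (x i) (x j) := by
  refine ⟨fun k => kpt (cos (k.val * (π/3))) (sin (k.val * (π/3))), fun i => ?_, fun i j hij => ?_⟩
  · rw [knorm, show cos (i.val * (π/3))^2 + sin (i.val * (π/3))^2 = 1 by
      rw [add_comm]; exact Real.sin_sq_add_cos_sq _]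
    exact Real.sqrt_one
  · have hpi := Real.pi_pos
    fin_cases i <;> fin_cases j <;>
      first
        | exact absurd rfl hij
        | (apply kge
           apply kcos
           · first
              | (left; push_cast; nlinarith)
              | (right; push_cast; nlinarith)
           · constructor <;> (push_cast; nlinarith))

private lemma kub (N : ℕ) (x : Fin N → EuclideanSpace ℝ (Fin 2))
    (hn : ∀ i, ‖x i‖ = 1) (hd : ∀ i j, i ≠ j → 1 ≤ dist (x i) (x j)) : N ≤ 6 := by
  have hpi := Real.pi_pos
  by_contra hlt
  push_neg at hlt
  -- angles
  set θ : Fin N → ℝ := fun i => Complex.arg (Complex.mk (x i 0) (x i 1)) with hθ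
  have habs : ∀ i, ‖Complex.mk (x i 0) (x i 1)‖ = 1 := by
    intro i
    have h1 : ‖x i‖ = Real.sqrt ((x i 0)^2 + (x i 1)^2) := by
      rw [EuclideanSpace.norm_eq, Fin.sum_univ_two, Real.norm_eq_abs, Real.norm_eq_abs,
        sq_abs, sq_abs]
    rw [Complex.norm_def, Complex.normSq_mk, ← h1.symm.trans (hn i)]
    congr 1; ring
  have hne : ∀ i, Complex.mk (x i 0) (x i 1) ≠ 0 := by
    intro i h
    have := habs i
    rw [h, norm_zero] at this
    exact one_ne_zero this.symm
  have hcos : ∀ i, cos (θ i) = x i 0 := by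
    intro i; rw [hθ]; simp only
    rw [Complex.cos_arg (hne i), habs i]; simp
  have hsin : ∀ i, sin (θ i) = x i 1 := by
    intro i; rw [hθ]; simp only
    rw [Complex.sin_arg, habs i]; simp
  have hx : ∀ i, x i = kpt (cos (θ i)) (sin (θ i)) := by
    intro i
    ext k
    fin_cases k
    · exact (hcos i).symm
    · exact (hsin i).symm
  -- angle bounds
  have hθub : ∀ i, θ i ≤ π := fun i => Complex.arg_le_pi _
  have hθlb : ∀ i, -π < θ i := fun i => Complex.neg_pi_lt_arg _
  -- buckets
  set t : Fin N → ℝ := fun i => (π - θ i) * 3 / π with ht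
  have htlb : ∀ i, 0 ≤ t i := by
    intro i; rw [ht]
    exact div_nonneg (by nlinarith [hθub i]) hpi.le
  have htub : ∀ i, t i < 6 := by
    intro i
    rw [ht]
    simp only
    rw [div_lt_iff₀ hpi]
    nlinarith [hθlb i]
  have hfl : ∀ i, (0:ℤ) ≤ ⌊t i⌋ := fun i => Int.floor_nonneg.mpr (htlb i)
  have hfu : ∀ i, ⌊t i⌋ < 6 := fun i => Int.floor_lt.mpr (by exact_mod_cast htub i)
  set f : Fin N → Fin 6 := fun i => ⟨(⌊t i⌋).toNat, by
    have := hfl i; have := hfu i; omega⟩ with hf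
  obtain ⟨i, j, hij, hfij⟩ := Fintype.exists_ne_map_eq_of_card_lt f (by simpa using hlt)
  have hfloor : ⌊t i⌋ = ⌊t j⌋ := by
    have : (⌊t i⌋).toNat = (⌊t j⌋).toNat := by
      simpa [hf] using congrArg Fin.val hfij
    have h1 := hfl i; have h2 := hfl j
    omega
  have hclose : |t i - t j| < 1 := Int.abs_sub_lt_one_of_floor_eq_floor hfloor
  have hang : |θ i - θ j| < π/3 := by
    have h1 : t i - t j = (θ j - θ i) * 3 / π := by rw [ht]; ring
    rw [h1, abs_div, abs_of_pos hpi, div_lt_one hpi, abs_mul] at hclose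
    norm_num at hclose
    rw [abs_sub_comm]
    linarith
  have hcosgt : 1/2 < cos (θ i - θ j) := by
    rw [← Real.cos_abs, ← Real.cos_pi_div_three]
    rcases eq_or_lt_of_le (abs_nonneg (θ i - θ j)) with he | hpos
    · rw [← he]; exact Real.cos_lt_cos_of_nonneg_of_le_pi (by positivity) (by linarith) (by linarith)
    · exact Real.cos_lt_cos_of_nonneg_of_le_pi (abs_nonneg _) (by linarith) hang
  have hdij := hd i j hij
  rw [hx i, hx j, kdist_cos] at hdij
  have : (1:ℝ) ≤ 2 - 2 * cos (θ i - θ j) := by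
    have h2 : (0:ℝ) ≤ 2 - 2 * cos (θ i - θ j) := by nlinarith [Real.cos_le_one (θ i - θ j)]
    nlinarith [Real.sq_sqrt h2, Real.sqrt_nonneg (2 - 2 * cos (θ i - θ j))]
  linarith

/-- The kissing number in dimension 2 is exactly 6: the maximum number of
points on the unit circle in ℝ² with pairwise Euclidean distance at least 1
is 6. -/
theorem kissing_number_dim_two :
    IsGreatest {N : ℕ | ∃ x : Fin N → EuclideanSpace ℝ (Fin 2),
      (∀ i, ‖x i‖ = 1) ∧ ∀ i j, i ≠ j → 1 ≤ dist (x i) (x j)} 6 := by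
  constructor
  · exact kex
  · rintro N ⟨x, hn, hd⟩
    exact kub N x hn hd
end

section
/- Five points cannot be placed on the unit sphere S² so that all pairwise angular distances exceed π/2; equivalently, among any 5 unit vectors in ℝ³ some pair has nonnegative inner product. -/
open scoped RealInnerProductSpace

open Finset in
lemma aux_negInner_linearIndependent {V : Type*} [NormedAddCommGroup V]
    [InnerProductSpace ℝ V] {n : ℕ} (v : Fin n → V) (t : V)
    (hvv : ∀ i j, i ≠ j → ⟪v i, v j⟫ < 0)
    (hvt : ∀ i, ⟪v i, t⟫ < 0) :
    LinearIndependent ℝ v := by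
  rw [Fintype.linearIndependent_iff]
  intro g hg
  set P := Finset.univ.filter (fun i => 0 < g i) with hP
  set N := Finset.univ.filter (fun i => g i < 0) with hN
  set w := ∑ i ∈ P, g i • v i with hw
  have hNsub : N ⊆ Pᶜ := by
    intro i hi
    simp only [hN, mem_filter] at hi
    simp only [hP, mem_compl, mem_filter, mem_univ, true_and, not_lt]
    linarith [hi.2]
  have hN' : ∑ i ∈ N, g i • v i = ∑ i ∈ Pᶜ, g i • v i := by
    refine Finset.sum_subset hNsub ?_
    intro i hi hni
    simp only [hP, mem_compl, mem_filter, mem_univ, true_and, not_lt] at hi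
    simp only [hN, mem_filter, mem_univ, true_and, not_lt] at hni
    have : g i = 0 := le_antisymm hi hni
    simp [this]
  have hsum : w + ∑ i ∈ N, g i • v i = 0 := by
    rw [hw, hN', Finset.sum_add_sum_compl]
    exact hg
  have hwu : w = ∑ i ∈ N, (-g i) • v i := by
    have h2 : ∑ i ∈ N, (-g i) • v i = -∑ i ∈ N, g i • v i := by
      simp [neg_smul]
    rw [h2]
    exact eq_neg_of_add_eq_zero_left hsum
  -- inner products across P and N are negative, coefficients positive
  have hterm : ∀ i ∈ P, ∀ j ∈ N, g i * (-g j) * ⟪v i, v j⟫ ≤ 0 := by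
    intro i hi j hj
    simp only [hP, mem_filter, mem_univ, true_and] at hi
    simp only [hN, mem_filter, mem_univ, true_and] at hj
    have hij : i ≠ j := by rintro rfl; linarith
    have hpos : 0 < g i * (-g j) := mul_pos hi (by linarith)
    exact (mul_neg_of_pos_of_neg hpos (hvv i j hij)).le
  have hwinner : ⟪w, w⟫ ≤ 0 := by
    nth_rewrite 2 [hwu]
    rw [hw, sum_inner]
    refine Finset.sum_nonpos ?_
    intro i hi
    rw [inner_sum]
    refine Finset.sum_nonpos ?_
    intro j hj
    rw [real_inner_smul_left, real_inner_smul_right]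
    have := hterm i hi j hj
    nlinarith [hterm i hi j hj]
  have hw0 : w = 0 := by
    have h0 : ⟪w, w⟫ = 0 := le_antisymm hwinner real_inner_self_nonneg
    exact inner_self_eq_zero.mp h0
  -- P is empty
  have hPempty : ∀ i ∈ P, False := by
    intro i₀ hi₀
    have h1 : ∑ i ∈ P, g i * ⟪v i, t⟫ = 0 := by
      have : ⟪w, t⟫ = (0 : ℝ) := by rw [hw0]; simp
      rw [hw, sum_inner] at this
      simpa [real_inner_smul_left] using this
    have h2 : ∀ i ∈ P, g i * ⟪v i, t⟫ ≤ 0 := by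
      intro i hi
      simp only [hP, mem_filter, mem_univ, true_and] at hi
      nlinarith [hvt i]
    have h3 := (Finset.sum_eq_zero_iff_of_nonpos h2).mp h1 i₀ hi₀
    simp only [hP, mem_filter, mem_univ, true_and] at hi₀
    nlinarith [hvt i₀]
  have hNempty : ∀ i ∈ N, False := by
    intro i₀ hi₀
    have hu0 : ∑ i ∈ N, (-g i) • v i = 0 := by rw [← hwu]; exact hw0
    have h1 : ∑ i ∈ N, (-g i) * ⟪v i, t⟫ = 0 := by
      have : ⟪∑ i ∈ N, (-g i) • v i, t⟫ = (0 : ℝ) := by rw [hu0]; simp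
      rw [sum_inner] at this
      simpa [real_inner_smul_left] using this
    have h2 : ∀ i ∈ N, (-g i) * ⟪v i, t⟫ ≤ 0 := by
      intro i hi
      simp only [hN, mem_filter, mem_univ, true_and] at hi
      nlinarith [hvt i]
    have h3 := (Finset.sum_eq_zero_iff_of_nonpos h2).mp h1 i₀ hi₀
    simp only [hN, mem_filter, mem_univ, true_and] at hi₀
    nlinarith [hvt i₀]
  intro i
  by_contra hgi
  rcases lt_or_gt_of_ne hgi with h | h
  · exact hNempty i (by simp [hN, h])
  · exact hPempty i (by simp [hP, h])

/-- Among any 5 unit vectors in ℝ³ some pair (of distinct indices) has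
nonnegative inner product; equivalently, five points cannot be placed on S²
with all pairwise angular distances exceeding π/2. -/
theorem five_unit_vectors_nonneg_inner (x : Fin 5 → EuclideanSpace ℝ (Fin 3))
    (hx : ∀ i, ‖x i‖ = 1) :
    ∃ i j, i ≠ j ∧ 0 ≤ ⟪x i, x j⟫ := by
  by_contra h
  push_neg at h
  have hneg : ∀ i j : Fin 5, i ≠ j → ⟪x i, x j⟫ < 0 := by
    intro i j hij; exact h i j hij
  have hli : LinearIndependent ℝ (fun i : Fin 4 => x i.castSucc) := by
    refine aux_negInner_linearIndependent _ (x (Fin.last 4)) ?_ ?_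
    · intro i j hij
      exact hneg _ _ (fun hc => hij (Fin.castSucc_injective _ hc))
    · intro i
      exact hneg _ _ (ne_of_lt (Fin.castSucc_lt_last i))
  have hcard := hli.fintype_card_le_finrank
  simp [finrank_euclideanSpace] at hcard
end

section
/- The Tammes problem for N = 6 (upper bound): for any 6 unit vectors in ℝ³, some pair of distinct vectors has inner product at least 0; i.e., the minimal angular separation of 6 points on S² is at most π/2 (attained by the octahedron). -/
open scoped RealInnerProductSpace

/-- Tammes problem for N = 6, upper bound: among any 6 unit vectors in ℝ³,
some pair of distinct vectors has inner product at least 0, i.e. the minimal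
angular separation of 6 points on S² is at most π/2 (the octahedron). -/
theorem tammes_six_upper (x : Fin 6 → EuclideanSpace ℝ (Fin 3))
    (hx : ∀ i, ‖x i‖ = 1) :
    ∃ i j, i ≠ j ∧ 0 ≤ ⟪x i, x j⟫ := by
  by_contra hcon
  push_neg at hcon
  -- hcon : ∀ i j, i ≠ j → ⟪x i, x j⟫ < 0
  let v : Fin 4 → EuclideanSpace ℝ (Fin 3) := fun i => x (Fin.castLE (by norm_num) i)
  have hv : ∀ i j : Fin 4, i ≠ j → ⟪v i, v j⟫ < 0 := fun i j hij =>
    hcon _ _ (fun e => hij (Fin.castLE_injective _ e))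
  have hvz : ∀ i : Fin 4, ⟪v i, x 4⟫ < 0 := by
    intro i
    refine hcon _ _ (fun e => ?_)
    have h4 := i.isLt
    have he : ((Fin.castLE (show 4 ≤ 6 by norm_num) i : Fin 6) : ℕ) = ((4 : Fin 6) : ℕ) :=
      congrArg Fin.val e
    simp [Fin.coe_castLE] at he
    omega
  have hli : LinearIndependent ℝ v := by
    rw [Fintype.linearIndependent_iff]
    intro a ha
    set P := Finset.univ.filter (fun i => 0 < a i) with hP
    set N := Finset.univ.filter (fun i => a i < 0) with hN
    have hdisj : Disjoint P N := by
      rw [Finset.disjoint_left]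
      intro i hi hi'
      simp [hP, hN] at hi hi'
      exact absurd hi' (not_lt.2 hi.le)
    have hsplit : ∑ i ∈ P ∪ N, a i • v i = 0 := by
      rw [← ha]
      refine Finset.sum_subset (Finset.subset_univ _) ?_
      intro i _ hi
      simp only [hP, hN, Finset.mem_union, Finset.mem_filter, Finset.mem_univ, true_and,
        not_or, not_lt] at hi
      have : a i = 0 := le_antisymm hi.1 hi.2
      simp [this]
    rw [Finset.sum_union hdisj] at hsplit
    set w := ∑ i ∈ P, a i • v i with hw
    have hwN : w = ∑ i ∈ N, (-a i) • v i := by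
      have := eq_neg_of_add_eq_zero_left hsplit
      rw [this, ← Finset.sum_neg_distrib]
      simp [neg_smul]
    have hww : ⟪w, w⟫ ≤ 0 := by
      rw [show (⟪w, w⟫ : ℝ) = ⟪∑ i ∈ P, a i • v i, ∑ i ∈ N, (-a i) • v i⟫ by
        rw [← hw, ← hwN]]
      rw [sum_inner]
      refine Finset.sum_nonpos fun i hi => ?_
      rw [real_inner_smul_left, inner_sum]
      refine mul_nonpos_of_nonneg_of_nonpos ?_ ?_
      · simp [hP] at hi; exact hi.le
      refine Finset.sum_nonpos fun j hj => ?_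
      rw [real_inner_smul_right]
      simp [hN] at hj
      have hij : i ≠ j := by
        rintro rfl
        simp [hP] at hi
        exact absurd hj (not_lt.2 hi.le)
      have := hv i j hij
      nlinarith
    have hw0 : w = 0 := by
      have hnn : (0:ℝ) ≤ ⟪w, w⟫ := real_inner_self_nonneg
      have h2 : ⟪w, w⟫ = 0 := le_antisymm hww hnn
      exact inner_self_eq_zero.1 h2
    have hPempty : P = ∅ := by
      by_contra hne
      have hne' : P.Nonempty := Finset.nonempty_of_ne_empty hne
      have h0 : ⟪w, x 4⟫ = 0 := by rw [hw0]; simp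
      rw [hw, sum_inner] at h0
      have : ∑ i ∈ P, ⟪a i • v i, x 4⟫ < 0 := by
        refine Finset.sum_neg (fun i hi => ?_) hne'
        rw [real_inner_smul_left]
        simp [hP] at hi
        exact mul_neg_of_pos_of_neg hi (hvz i)
      linarith
    have hNempty : N = ∅ := by
      by_contra hne
      have hne' : N.Nonempty := Finset.nonempty_of_ne_empty hne
      have h0 : ⟪w, x 4⟫ = 0 := by rw [hw0]; simp
      rw [hwN, sum_inner] at h0
      have : ∑ i ∈ N, ⟪(-a i) • v i, x 4⟫ < 0 := by
        refine Finset.sum_neg (fun i hi => ?_) hne'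
        rw [real_inner_smul_left]
        simp [hN] at hi
        exact mul_neg_of_pos_of_neg (by linarith) (hvz i)
      linarith
    intro i
    by_contra hai
    rcases lt_or_gt_of_ne hai with h | h
    · have : i ∈ N := by simp [hN, h]
      simp [hNempty] at this
    · have : i ∈ P := by simp [hP, h]
      simp [hPempty] at this
  have hcard := hli.fintype_card_le_finrank
  simp [finrank_euclideanSpace] at hcard
end

section
/- Einhorn–Schoenberg theorem: a simple graph G on n vertices has a Euclidean two-distance representation in ℝ^{n−2} or lower dimension unless G is a disjoint union of cliques; equivalently, dim₂(G) = n − 1 if and only if G is a disjoint union of complete graphs. -/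
open Finset Module Submodule Matrix

lemma ES.finrank_span_le {E : Type*} [AddCommGroup E] [Module ℝ E]
    {n r : ℕ} (c : Fin n → E) (μ : Fin r → (Fin n → ℝ))
    (hind : LinearIndependent ℝ μ)
    (hker : ∀ t, ∑ i, μ t i • c i = 0) :
    finrank ℝ (span ℝ (Set.range c)) ≤ n - r := by
  let φ : (Fin n → ℝ) →ₗ[ℝ] E :=
    { toFun := fun x => ∑ i, x i • c i
      map_add' := by intro x y; simp [add_smul, Finset.sum_add_distrib]
      map_smul' := by intro s x; simp [smul_smul, Finset.smul_sum]  }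
  have hφ : ∀ x, φ x = ∑ i, x i • c i := fun _ => rfl
  have hrange : LinearMap.range φ = span ℝ (Set.range c) := by
    apply le_antisymm
    · rintro x hx
      obtain ⟨y, rfl⟩ := LinearMap.mem_range.mp hx
      rw [hφ]
      exact sum_mem fun i _ => smul_mem _ _ (subset_span (Set.mem_range_self i))
    · rw [span_le]
      rintro x ⟨i, rfl⟩
      refine LinearMap.mem_range.mpr ⟨Pi.single i 1, ?_⟩
      rw [hφ]
      have h2 : ∀ j, (Pi.single i 1 : Fin n → ℝ) j • c j = if j = i then c j else 0 := by
        intro j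
        by_cases h : j = i <;> simp [Pi.single_apply, h]
      simp_rw [h2]
      simp
  have h1 := LinearMap.finrank_range_add_finrank_ker φ
  rw [hrange, Module.finrank_fin_fun] at h1
  have h2 : r ≤ finrank ℝ (LinearMap.ker φ) := by
    have hle : span ℝ (Set.range μ) ≤ LinearMap.ker φ := by
      rw [span_le]
      rintro x ⟨t, rfl⟩
      exact hker t
    have := Submodule.finrank_mono hle
    rwa [finrank_span_eq_card hind, Fintype.card_fin] at this
  omega

lemma ES.iso_embed {E : Type*} [NormedAddCommGroup E] [InnerProductSpace ℝ E]
    {n k : ℕ} (v : Fin n → E)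
    (h : finrank ℝ (span ℝ (Set.range v)) ≤ k) :
    ∃ p : Fin n → EuclideanSpace ℝ (Fin k),
      ∀ i j, (inner ℝ (p i) (p j) : ℝ) = (inner ℝ (v i) (v j) : ℝ) := by
  set W := span ℝ (Set.range v) with hW
  haveI : FiniteDimensional ℝ W := FiniteDimensional.span_of_finite ℝ (Set.finite_range v)
  set r := finrank ℝ W with hr
  have hrk : r ≤ k := h
  let b := stdOrthonormalBasis ℝ W
  let w : Fin n → W := fun i => ⟨v i, subset_span (Set.mem_range_self i)⟩
  let p : Fin n → EuclideanSpace ℝ (Fin k) := fun i =>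
    WithLp.toLp 2 (fun t => if ht : (t : ℕ) < r then b.repr (w i) ⟨t, ht⟩ else 0)
  refine ⟨p, fun i j => ?_⟩
  have hww : (inner ℝ (w i) (w j) : ℝ) = inner ℝ (v i) (v j) := rfl
  rw [← hww, ← b.repr.inner_map_map (w i) (w j)]
  rw [PiLp.inner_apply, PiLp.inner_apply]
  simp only [RCLike.inner_apply', starRingEnd_apply, star_trivial]
  let e : Fin r ↪ Fin k := Fin.castLEEmb hrk
  have hvanish : ∀ t ∈ Finset.univ, t ∉ Finset.univ.map e → p i t * p j t = 0 := by
    intro t _ ht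
    have : ¬ ((t : ℕ) < r) := by
      intro hlt
      exact ht (Finset.mem_map.mpr ⟨⟨t, hlt⟩, Finset.mem_univ _, by
        simp [e, Fin.castLEEmb, Fin.castLE]⟩)
    simp [p, PiLp.toLp_apply, this]
  calc (∑ t : Fin k, p i t * p j t)
      = ∑ t ∈ Finset.univ.map e, p i t * p j t :=
        (Finset.sum_subset (Finset.subset_univ _) hvanish).symm
    _ = ∑ s : Fin r, p i (e s) * p j (e s) := Finset.sum_map _ _ _
    _ = ∑ s : Fin r, b.repr (w i) s * b.repr (w j) s := by
        apply Finset.sum_congr rfl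
        intro s _
        have hs : ((e s : Fin k) : ℕ) < r := by simp [e, Fin.castLEEmb, Fin.castLE, s.isLt]
        simp only [p, PiLp.toLp_apply, dif_pos hs]
        congr 1 <;> · congr 1; exact Fin.ext (by simp [e, Fin.castLEEmb, Fin.castLE])

open scoped MatrixOrder in
lemma ES.gram_points {n r k : ℕ} (M : Matrix (Fin n) (Fin n) ℝ) (hM : M.PosSemidef)
    (μ : Fin r → (Fin n → ℝ)) (hind : LinearIndependent ℝ μ)
    (hker : ∀ t, dotProduct (μ t) (M.mulVec (μ t)) = 0)
    (hk : n - r ≤ k) :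
    ∃ p : Fin n → EuclideanSpace ℝ (Fin k),
      ∀ i j, (inner ℝ (p i) (p j) : ℝ) = M i j := by
  obtain ⟨B, hB⟩ := CStarAlgebra.nonneg_iff_eq_star_mul_self.mp (Matrix.nonneg_iff_posSemidef.mpr hM)
  rw [Matrix.star_eq_conjTranspose] at hB
  have hBt : Bᴴ = Bᵀ := by
    ext i j; simp [Matrix.conjTranspose_apply]
  rw [hBt] at hB
  let c : Fin n → EuclideanSpace ℝ (Fin n) := fun i => WithLp.toLp 2 (fun j => B j i)
  have hinner : ∀ i j, (inner ℝ (c i) (c j) : ℝ) = M i j := by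
    intro i j
    rw [PiLp.inner_apply]
    simp only [RCLike.inner_apply', starRingEnd_apply, star_trivial]
    rw [hB]
    simp only [Matrix.mul_apply, Matrix.transpose_apply, c, PiLp.toLp_apply]
  have hBker : ∀ t, B.mulVec (μ t) = 0 := by
    intro t
    rw [← dotProduct_self_eq_zero (v := B.mulVec (μ t))]
    have h2 : μ t ⬝ᵥ M.mulVec (μ t) = B.mulVec (μ t) ⬝ᵥ B.mulVec (μ t) := by
      rw [hB, ← Matrix.mulVec_mulVec, dotProduct_mulVec, Matrix.vecMul_transpose]
    rw [← h2]
    exact hker t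
  have hker2 : ∀ t, ∑ i, μ t i • c i = 0 := by
    intro t
    ext j
    show _ = (0 : Fin n → ℝ) j
    rw [← congrFun (hBker t) j]
    simp [c, Matrix.mulVec, dotProduct, mul_comm]
  have hspan := ES.finrank_span_le c μ hind hker2
  obtain ⟨p, hp⟩ := ES.iso_embed c (le_trans hspan hk)
  exact ⟨p, fun i j => (hp i j).trans (hinner i j)⟩

lemma ES.sum_sum_mul_right {n : ℕ} (x g : Fin n → ℝ) :
    ∑ u, ∑ v, x u * x v * g u = (∑ u, x u * g u) * (∑ v, x v) := by
  rw [Finset.sum_mul]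
  apply Finset.sum_congr rfl
  intro u _
  rw [Finset.mul_sum]
  apply Finset.sum_congr rfl
  intro v _
  ring

lemma ES.sum_sum_mul_left {n : ℕ} (x g : Fin n → ℝ) :
    ∑ u, ∑ v, x u * x v * g v = (∑ u, x u) * (∑ v, x v * g v) := by
  calc ∑ u, ∑ v, x u * x v * g v = ∑ v, ∑ u, x u * x v * g v := Finset.sum_comm
    _ = ∑ v, ∑ u, x v * x u * g v := by
        apply Finset.sum_congr rfl; intro v _; apply Finset.sum_congr rfl; intro u _; ring
    _ = (∑ v, x v * g v) * (∑ u, x u) := ES.sum_sum_mul_right x g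
    _ = (∑ u, x u) * (∑ v, x v * g v) := mul_comm _ _

lemma ES.sum_sum_const {n : ℕ} (x : Fin n → ℝ) (c : ℝ) :
    ∑ u, ∑ v, x u * x v * c = (∑ u, x u) * (∑ v, x v) * c := by
  calc ∑ u, ∑ v, x u * x v * c = (∑ u, x u * c) * ∑ v, x v := ES.sum_sum_mul_right x (fun _ => c)
    _ = (∑ u, x u) * c * ∑ v, x v := by rw [← Finset.sum_mul]
    _ = (∑ u, x u) * (∑ v, x v) * c := by ring

lemma ES.embed {n k : ℕ} (d : Fin n → Fin n → ℝ)
    (hsymm : ∀ u v, d u v = d v u) (hdiag : ∀ u, d u u = 0)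
    (hneg : ∀ l : Fin n → ℝ, (∑ i, l i) = 0 → (∑ u, ∑ v, l u * l v * d u v) ≤ 0)
    (hk : (n ≤ k + 1) ∨ (∃ l : Fin n → ℝ, l ≠ 0 ∧ (∑ i, l i) = 0 ∧
      (∑ u, ∑ v, l u * l v * d u v) = 0 ∧ n ≤ k + 2)) :
    ∃ f : Fin n → EuclideanSpace ℝ (Fin k), ∀ u v, dist (f u) (f v) ^ 2 = d u v := by
  rcases Nat.eq_zero_or_pos n with hn | hn
  · subst hn
    exact ⟨fun _ => 0, fun u => u.elim0⟩
  have hn0 : (n:ℝ) ≠ 0 := Nat.cast_ne_zero.mpr hn.ne'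
  set rr : Fin n → ℝ := fun u => (∑ y, d u y) / n with hrr
  set tt : ℝ := (∑ a, ∑ b, d a b) / (n^2) with htt
  set G : Matrix (Fin n) (Fin n) ℝ :=
    Matrix.of (fun u v => -(d u v - rr u - rr v + tt)/2) with hG
  have hCsum : ∀ x : Fin n → ℝ, (∑ i, (x i - (∑ j, x j)/n)) = 0 := by
    intro x
    rw [Finset.sum_sub_distrib, Finset.sum_const, Finset.card_univ, Fintype.card_fin, nsmul_eq_mul]
    field_simp
    ring
  have hquad : ∀ x : Fin n → ℝ,
      dotProduct x (G.mulVec x)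
        = -(1/2) * (∑ u, ∑ v, (x u - (∑ j, x j)/n) * (x v - (∑ j, x j)/n) * d u v) := by
    intro x
    have hL : dotProduct x (G.mulVec x)
        = ∑ u, ∑ v, x u * x v * (-(d u v - rr u - rr v + tt)/2) := by
      simp only [dotProduct, Matrix.mulVec, hG, Matrix.of_apply, Finset.mul_sum]
      apply Finset.sum_congr rfl; intro u _
      apply Finset.sum_congr rfl; intro v _
      ring
    have hexp : ∀ u v : Fin n, x u * x v * (-(d u v - rr u - rr v + tt)/2)
        = (-(1:ℝ)/2) * (x u * x v * d u v) + ((1:ℝ)/2) * (x u * x v * rr u)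
          + ((1:ℝ)/2) * (x u * x v * rr v) + (-(1:ℝ)/2) * (x u * x v * tt) := by
      intro u v; ring
    have hexp2 : ∀ u v : Fin n, (x u - (∑ j, x j)/n) * (x v - (∑ j, x j)/n) * d u v
        = x u * x v * d u v - ((∑ j, x j)/n) * (x v * d u v)
          - ((∑ j, x j)/n) * (x u * d u v) + ((∑ j, x j)/n)^2 * d u v := by
      intro u v; ring
    rw [hL]
    simp_rw [hexp, hexp2, Finset.sum_add_distrib, Finset.sum_sub_distrib, ← Finset.mul_sum]
    rw [ES.sum_sum_mul_right x rr, ES.sum_sum_mul_left x rr, ES.sum_sum_const x tt]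
    have h1 : (∑ u, x u * rr u) = (∑ u, x u * (∑ y, d u y)) / n := by
      rw [Finset.sum_div]
      apply Finset.sum_congr rfl; intro u _
      rw [hrr]
      all_goals ring
    have h3 : ∑ u, ∑ v, x v * d u v = ∑ u, x u * (∑ y, d u y) := by
      rw [Finset.sum_comm]
      apply Finset.sum_congr rfl; intro v _
      rw [Finset.mul_sum]
      apply Finset.sum_congr rfl; intro u _
      rw [hsymm u v]
      all_goals ring
    have h4 : ∑ u, ∑ v, x u * d u v = ∑ u, x u * (∑ y, d u y) := by
      apply Finset.sum_congr rfl; intro u _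
      rw [Finset.mul_sum]
    rw [h1, h3, htt]
    all_goals try rw [h4]
    field_simp
    ring
  have hpsd : G.PosSemidef := by
    refine Matrix.PosSemidef.of_dotProduct_mulVec_nonneg ?_ ?_
    · show Gᴴ = G
      ext i j
      simp only [hG, Matrix.conjTranspose_apply, Matrix.of_apply, star_trivial]
      rw [hsymm i j]
      ring
    · intro y
      have hsy : star y = y := by
        funext i; simp
      rw [hsy, hquad y]
      have := hneg _ (hCsum y)
      linarith
  have hones : dotProduct (fun _ => (1:ℝ)) (G.mulVec (fun _ => 1)) = 0 := by
    rw [hquad]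
    have hzero : ((1:ℝ) - (∑ _j : Fin n, (1:ℝ))/n) = 0 := by
      rw [Finset.sum_const, Finset.card_univ, Fintype.card_fin, nsmul_eq_mul]
      field_simp
      ring
    simp only [hzero, zero_mul, Finset.sum_const_zero, mul_zero]
  have honesne : (fun _ => (1:ℝ)) ≠ (0 : Fin n → ℝ) := by
    intro h
    have := congrFun h ⟨0, hn⟩
    simp at this
  -- get points
  have hmain : ∃ p : Fin n → EuclideanSpace ℝ (Fin k),
      ∀ i j, (inner ℝ (p i) (p j) : ℝ) = G i j := by
    rcases hk with h1 | ⟨lam, hlne, hlsum, hlq, h2⟩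
    · refine ES.gram_points G hpsd ![fun _ => 1]
        (linearIndependent_unique_iff.mpr (by simpa using honesne)) ?_ (by omega)
      intro t
      fin_cases t
      simpa using hones
    · have hlker : dotProduct lam (G.mulVec lam) = 0 := by
        rw [hquad]
        have : ∀ i, lam i - (∑ j, lam j)/n = lam i := by
          intro i; rw [hlsum]; simp
        simp_rw [this]
        rw [hlq]; ring
      refine ES.gram_points G hpsd ![fun _ => 1, lam] ?_ ?_ (by omega)
      · rw [LinearIndependent.pair_iff]
        intro s t hst
        have hsum0 := congrArg (fun z => ∑ i, z i) hst
        simp only [Pi.add_apply, Pi.smul_apply, smul_eq_mul, Pi.zero_apply, Finset.sum_const_zero] at hsum0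
        rw [Finset.sum_add_distrib, ← Finset.mul_sum, ← Finset.mul_sum, hlsum,
          Finset.sum_const, Finset.card_univ, Fintype.card_fin] at hsum0
        simp only [mul_zero, add_zero, nsmul_eq_mul, mul_one] at hsum0
        have hs : s = 0 := by
          rcases mul_eq_zero.mp hsum0 with h | h
          · exact h
          · exact absurd h hn0
        refine ⟨hs, ?_⟩
        rw [hs] at hst
        simp only [zero_smul, zero_add] at hst
        rcases smul_eq_zero.mp hst with h | h
        · exact h
        · exact absurd h hlne
      · intro t
        fin_cases t
        · simpa using hones
        · simpa using hlker
  obtain ⟨p, hp⟩ := hmain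
  refine ⟨p, fun u v => ?_⟩
  calc dist (p u) (p v) ^ 2 = ‖p u - p v‖ ^ 2 := by rw [dist_eq_norm]
    _ = ‖p u‖ ^ 2 - 2 * (inner ℝ (p u) (p v) : ℝ) + ‖p v‖ ^ 2 := norm_sub_sq_real _ _
    _ = G u u - 2 * G u v + G v v := by
        rw [← real_inner_self_eq_norm_sq, ← real_inner_self_eq_norm_sq, hp, hp, hp]
    _ = d u v := by
        simp only [hG, Matrix.of_apply]
        rw [hdiag u, hdiag v]
        ring

lemma ES.class_sum {n : ℕ} {α : Type*} [Fintype α] [DecidableEq α]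
    (q : Fin n → α) (W : Fin n → ℝ) :
    ∑ u, ∑ v, W u * W v * (if q u = q v then (1:ℝ) else 0)
      = ∑ c : α, (∑ u, (if q u = c then W u else 0))^2 := by
  have hpt : ∀ u v, W u * W v * (if q u = q v then (1:ℝ) else 0)
      = ∑ c : α, (if q u = c then W u else 0) * (if q v = c then W v else 0) := by
    intro u v
    have hc : ∀ c, (if q u = c then W u else 0) * (if q v = c then W v else 0)
        = if q u = c then (if q v = c then W u * W v else 0) else 0 := by
      intro c; split_ifs <;> ring
    simp_rw [hc]
    rw [Finset.sum_ite_eq Finset.univ (q u) (fun c => if q v = c then W u * W v else 0)]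
    simp only [Finset.mem_univ, if_true]
    by_cases h : q u = q v
    · simp [h]
    · have h2 : ¬ (q v = q u) := fun hh => h hh.symm
      simp [h, h2]
  simp_rw [hpt]
  calc ∑ u, ∑ v, ∑ c, (if q u = c then W u else 0) * (if q v = c then W v else 0)
      = ∑ u, ∑ c, ∑ v, (if q u = c then W u else 0) * (if q v = c then W v else 0) := by
        apply Finset.sum_congr rfl; intro u _; exact Finset.sum_comm
    _ = ∑ c, ∑ u, ∑ v, (if q u = c then W u else 0) * (if q v = c then W v else 0) :=
        Finset.sum_comm
    _ = ∑ c : α, (∑ u, (if q u = c then W u else 0))^2 := by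
        apply Finset.sum_congr rfl; intro c _
        rw [sq, Finset.sum_mul]
        apply Finset.sum_congr rfl; intro u _
        rw [Finset.mul_sum]

/-- `G` has a Euclidean two-distance representation in ℝ^d: there are
`0 < a ≤ b` and an embedding of the vertices such that adjacent vertices are
at distance `a` and non-adjacent distinct vertices at distance `b`. -/
def HasTwoDistRep {n : ℕ} (G : SimpleGraph (Fin n)) [DecidableRel G.Adj] (d : ℕ) : Prop :=
  ∃ a b : ℝ, 0 < a ∧ a ≤ b ∧
    ∃ f : Fin n → EuclideanSpace ℝ (Fin d),
      ∀ u v : Fin n, u ≠ v →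
        dist (f u) (f v) = if G.Adj u v then a else b

/-- The Euclidean representation number `dim₂(G)`: the smallest `d` such that
`G` has a two-distance representation in ℝ^d. -/
noncomputable def dimTwo {n : ℕ} (G : SimpleGraph (Fin n)) [DecidableRel G.Adj] : ℕ :=
  sInf {d : ℕ | HasTwoDistRep G d}

lemma ES.lower {n dd : ℕ} (G : SimpleGraph (Fin n)) [DecidableRel G.Adj]
    (htrans : ∀ u v w : Fin n, G.Adj u v → G.Adj v w → u ≠ w → G.Adj u w)
    (h : HasTwoDistRep G dd) : n ≤ dd + 1 := by
  obtain ⟨a, b, ha, hab, f, hf⟩ := h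
  classical
  let r : Fin n → Fin n → Prop := fun u v => u = v ∨ G.Adj u v
  have hrequiv : Equivalence r := by
    constructor
    · intro x; exact Or.inl rfl
    · intro x y hxy
      rcases hxy with h1 | h1
      · exact Or.inl h1.symm
      · exact Or.inr h1.symm
    · intro x y z h1 h2
      rcases h1 with h1 | h1
      · rwa [h1]
      rcases h2 with h2 | h2
      · exact Or.inr (h2 ▸ h1)
      by_cases hxz : x = z
      · exact Or.inl hxz
      · exact Or.inr (htrans x y z h1 h2 hxz)
  let st : Setoid (Fin n) := ⟨r, hrequiv⟩
  let q : Fin n → Quotient st := fun u => Quotient.mk st u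
  have hq : ∀ u v : Fin n, q u = q v ↔ r u v := by
    intro u v
    exact Quotient.eq (r := st)
  have haff : AffineIndependent ℝ f := by
    rw [affineIndependent_iff]
    intro s w hw0 hw1 e he
    set W : Fin n → ℝ := fun i => if i ∈ s then w i else 0 with hWdef
    have hWsum : ∑ i, W i = 0 := by
      rw [hWdef, Finset.sum_ite_mem, Finset.univ_inter]; exact hw0
    have hWvec : (∑ i, W i • f i) = 0 := by
      rw [hWdef]
      simp_rw [ite_smul, zero_smul]
      rw [Finset.sum_ite_mem, Finset.univ_inter]; exact hw1
    have hinner0 : ∑ u, W u * ∑ v, W v * (inner ℝ (f u) (f v) : ℝ) = 0 := by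
      have h0 : (inner ℝ (∑ i, W i • f i) (∑ j, W j • f j) : ℝ) = 0 := by
        rw [hWvec]; simp
      rw [sum_inner] at h0
      rw [← h0]
      apply Finset.sum_congr rfl; intro u _
      rw [real_inner_smul_left, inner_sum]
      congr 1
      apply Finset.sum_congr rfl; intro v _
      rw [real_inner_smul_right]
    have hSQ : ∑ u, ∑ v, W u * W v * dist (f u) (f v)^2 = 0 := by
      have hpt : ∀ u v : Fin n, W u * W v * dist (f u) (f v)^2
          = W u * W v * (‖f u‖^2) + W u * W v * (‖f v‖^2)
            - 2 * (W u * (W v * (inner ℝ (f u) (f v) : ℝ))) := by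
        intro u v
        rw [dist_eq_norm, norm_sub_sq_real]
        ring
      simp_rw [hpt, Finset.sum_sub_distrib, Finset.sum_add_distrib, ← Finset.mul_sum]
      rw [ES.sum_sum_mul_right W (fun u => ‖f u‖^2), ES.sum_sum_mul_left W (fun v => ‖f v‖^2)]
      rw [hWsum, hinner0]
      ring
    have hdist2 : ∀ u v : Fin n, dist (f u) (f v)^2
        = b^2 + (a^2 - b^2) * (if G.Adj u v then 1 else 0)
          - b^2 * (if u = v then 1 else 0) := by
      intro u v
      by_cases huv : u = v
      · subst huv
        simp [SimpleGraph.irrefl]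
      · rw [hf u v huv]
        by_cases hadj : G.Adj u v
        · simp only [if_pos hadj, if_neg huv]
          ring
        · simp only [if_neg hadj, if_neg huv]
          ring
    have hpt2 : ∀ u v : Fin n, W u * W v * dist (f u) (f v)^2
        = b^2 * (W u * W v * 1) + (a^2 - b^2) * (W u * W v * (if G.Adj u v then 1 else 0))
          - b^2 * (W u * W v * (if u = v then 1 else 0)) := by
      intro u v; rw [hdist2 u v]; ring
    have hD : ∑ u, ∑ v, W u * W v * (if u = v then (1:ℝ) else 0) = ∑ u, W u * W u := by
      apply Finset.sum_congr rfl; intro u _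
      have : ∀ v, W u * W v * (if u = v then (1:ℝ) else 0)
          = if u = v then W u * W v else 0 := by
        intro v; split_ifs <;> ring
      simp_rw [this]
      rw [Finset.sum_ite_eq Finset.univ u (fun v => W u * W v)]
      simp
    have hEpt : ∀ u v : Fin n, (if G.Adj u v then (1:ℝ) else 0)
        = (if q u = q v then (1:ℝ) else 0) - (if u = v then (1:ℝ) else 0) := by
      intro u v
      by_cases huv : u = v
      · subst huv
        simp [SimpleGraph.irrefl, hq, r]
      · by_cases hadj : G.Adj u v
        · have : q u = q v := (hq u v).mpr (Or.inr hadj)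
          simp [hadj, huv, this]
        · have : ¬ (q u = q v) := by
            intro hc
            rcases (hq u v).mp hc with h1 | h1
            · exact huv h1
            · exact hadj h1
          simp [hadj, huv, this]
    have hEsum : ∑ u, ∑ v, W u * W v * (if G.Adj u v then (1:ℝ) else 0)
        = (∑ c : Quotient st, (∑ u, (if q u = c then W u else 0))^2) - ∑ u, W u * W u := by
      have : ∀ u v : Fin n, W u * W v * (if G.Adj u v then (1:ℝ) else 0)
          = W u * W v * (if q u = q v then (1:ℝ) else 0)
            - W u * W v * (if u = v then (1:ℝ) else 0) := by
        intro u v; rw [hEpt u v]; ring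
      simp_rw [this, Finset.sum_sub_distrib]
      rw [ES.class_sum q W, hD]
    have hfinal : ∑ u, ∑ v, W u * W v * dist (f u) (f v)^2
        = b^2 * ((∑ u, W u) * (∑ v, W v) * 1)
          + (a^2 - b^2) * (∑ u, ∑ v, W u * W v * (if G.Adj u v then (1:ℝ) else 0))
          - b^2 * (∑ u, ∑ v, W u * W v * (if u = v then (1:ℝ) else 0)) := by
      simp_rw [hpt2, Finset.sum_sub_distrib, Finset.sum_add_distrib, ← Finset.mul_sum]
      rw [ES.sum_sum_const W 1]
    rw [hSQ, hEsum, hD, hWsum] at hfinal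
    have hPnn : (0:ℝ) ≤ ∑ c : Quotient st, (∑ u, (if q u = c then W u else 0))^2 :=
      Finset.sum_nonneg (fun c _ => sq_nonneg _)
    have hDnn : (0:ℝ) ≤ ∑ u, W u * W u :=
      Finset.sum_nonneg (fun u _ => mul_self_nonneg _)
    have hab2 : a^2 ≤ b^2 := by nlinarith
    have ha2 : 0 < a^2 := by positivity
    have hD0 : ∑ u, W u * W u = 0 := by nlinarith
    have hW0 : ∀ i, W i = 0 := by
      intro i
      have := (Finset.sum_eq_zero_iff_of_nonneg
        (fun u (_ : u ∈ Finset.univ) => mul_self_nonneg (W u))).mp hD0 i (Finset.mem_univ i)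
      exact mul_self_eq_zero.mp this
    have := hW0 e
    rw [hWdef] at this
    simpa [he] using this
  have hcard := haff.card_le_finrank_succ
  have hle : finrank ℝ (vectorSpan ℝ (Set.range f)) ≤ dd := by
    have := Submodule.finrank_le (vectorSpan ℝ (Set.range f))
    rwa [finrank_euclideanSpace_fin] at this
  rw [Fintype.card_fin] at hcard
  omega

lemma ES.sum_sum_diag {n : ℕ} (x : Fin n → ℝ) :
    ∑ u, ∑ v, x u * x v * (if u = v then (1:ℝ) else 0) = ∑ u, x u * x u := by
  apply Finset.sum_congr rfl; intro u _
  have h : ∀ v, x u * x v * (if u = v then (1:ℝ) else 0)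
      = if u = v then x u * x v else 0 := by
    intro v; split_ifs <;> ring
  simp_rw [h]
  rw [Finset.sum_ite_eq Finset.univ u (fun v => x u * x v)]
  simp

lemma ES.eq_of_sq_eq_sq {A c : ℝ} (hA : 0 ≤ A) (hc : 0 ≤ c) (h : A^2 = c^2) : A = c := by
  nlinarith [sq_nonneg (A - c), sq_nonneg (A + c)]

lemma ES.upper1 {n : ℕ} (G : SimpleGraph (Fin n)) [DecidableRel G.Adj] :
    HasTwoDistRep G (n - 1) := by
  have hembed := ES.embed (n := n) (k := n - 1)
    (fun u v => if u = v then 0 else 1)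
    (by intro u v; by_cases h : u = v
        · simp [h]
        · have h2 : ¬ (v = u) := fun hh => h hh.symm
          simp [h, h2])
    (by intro u; simp)
    (by intro l hl
        have hpt : ∀ u v : Fin n, l u * l v * (if u = v then (0:ℝ) else 1)
            = l u * l v * 1 - l u * l v * (if u = v then (1:ℝ) else 0) := by
          intro u v; split_ifs <;> ring
        simp_rw [hpt, Finset.sum_sub_distrib]
        rw [ES.sum_sum_const l 1, ES.sum_sum_diag l, hl]
        have : 0 ≤ ∑ u, l u * l u := Finset.sum_nonneg (fun u _ => mul_self_nonneg _)
        linarith)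
    (Or.inl (by omega))
  obtain ⟨f, hfd⟩ := hembed
  refine ⟨1, 1, one_pos, le_refl 1, f, fun u v huv => ?_⟩
  have h2 := hfd u v
  rw [if_neg huv] at h2
  have : dist (f u) (f v) = 1 := by
    have h3 : dist (f u) (f v) = Real.sqrt (dist (f u) (f v) ^ 2) :=
      (Real.sqrt_sq dist_nonneg).symm
    rw [h3, h2, Real.sqrt_one]
  rw [this]
  split_ifs <;> rfl

lemma ES.upper2 {n : ℕ} (G : SimpleGraph (Fin n)) [DecidableRel G.Adj]
    (u0 v0 w0 : Fin n) (huv : G.Adj u0 v0) (hvw : G.Adj v0 w0) (huw : u0 ≠ w0)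
    (hnadj : ¬ G.Adj u0 w0) : HasTwoDistRep G (n - 2) := by
  classical
  set e : Fin n → Fin n → ℝ := fun u v => if G.Adj u v then 1 else 0 with he
  set Aq : EuclideanSpace ℝ (Fin n) → ℝ := fun l => ∑ u, ∑ v, l u * l v * e u v with hAq
  set qf : ℝ → EuclideanSpace ℝ (Fin n) → ℝ :=
    fun c l => (∑ i, l i * l i) + c * Aq l with hqf
  set K : Set (EuclideanSpace ℝ (Fin n)) :=
    {l | (∑ i, l i) = 0 ∧ ‖l‖ = 1} with hK
  have hvne : u0 ≠ v0 := G.ne_of_adj huv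
  have hvwne : v0 ≠ w0 := G.ne_of_adj hvw
  -- coordinates continuous
  have hcoord : ∀ i : Fin n, Continuous (fun l : EuclideanSpace ℝ (Fin n) => l i) := by
    intro i
    exact (continuous_apply i).comp (PiLp.continuous_ofLp 2 (fun _ : Fin n => ℝ))
  have hsumcont : Continuous (fun l : EuclideanSpace ℝ (Fin n) => ∑ i, l i) :=
    continuous_finset_sum _ (fun i _ => hcoord i)
  have hqc : ∀ c : ℝ, Continuous (qf c) := by
    intro c
    apply Continuous.add
    · exact continuous_finset_sum _ (fun i _ => (hcoord i).mul (hcoord i))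
    · apply Continuous.mul continuous_const
      exact continuous_finset_sum _ (fun u _ =>
        continuous_finset_sum _ (fun v _ => ((hcoord u).mul (hcoord v)).mul continuous_const))
  have hKc : IsCompact K := by
    apply IsCompact.of_isClosed_subset (isCompact_closedBall (0 : EuclideanSpace ℝ (Fin n)) 1)
    · exact IsClosed.inter (isClosed_eq hsumcont continuous_const)
        (isClosed_eq continuous_norm continuous_const)
    · intro l hl
      rw [Metric.mem_closedBall, dist_zero_right]
      exact le_of_eq hl.2
  have hnormsq : ∀ l : EuclideanSpace ℝ (Fin n), ∑ i, l i * l i = ‖l‖^2 := by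
    intro l
    rw [EuclideanSpace.norm_eq]
    rw [Real.sq_sqrt (Finset.sum_nonneg (fun i _ => sq_nonneg _))]
    apply Finset.sum_congr rfl; intro i _
    rw [sq, Real.norm_eq_abs, abs_mul_abs_self]
  have hmem : ∀ x : EuclideanSpace ℝ (Fin n), x ≠ 0 → (∑ i, x i) = 0 →
      (‖x‖⁻¹ • x) ∈ K := by
    intro x hx hsx
    constructor
    · have : ∀ i, (‖x‖⁻¹ • x) i = ‖x‖⁻¹ * x i := fun i => rfl
      simp_rw [this, ← Finset.mul_sum, hsx, mul_zero]
    · rw [norm_smul, norm_inv, norm_norm]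
      field_simp [norm_ne_zero_iff.mpr hx]
  have hom : ∀ (c t : ℝ) (x : EuclideanSpace ℝ (Fin n)), qf c (t • x) = t^2 * qf c x := by
    intro c t x
    rw [hqf]
    simp only []
    have h1 : ∀ i, (t • x) i = t * x i := fun i => rfl
    simp_rw [h1]
    rw [hAq]
    simp only []
    simp_rw [h1]
    have h2 : ∀ u v : Fin n, (t * x u) * (t * x v) * e u v = t^2 * (x u * x v * e u v) := by
      intro u v; ring
    have h3 : ∀ i, (t * x i) * (t * x i) = t^2 * (x i * x i) := by intro i; ring
    simp_rw [h2, h3, ← Finset.mul_sum]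
    ring
  -- nonempty
  have hg : ∃ g : EuclideanSpace ℝ (Fin n), g ≠ 0 ∧ (∑ i, g i) = 0 := by
    refine ⟨(WithLp.toLp 2 (fun i => (if i = u0 then 1 else 0) - (if i = v0 then 1 else 0)) :
      EuclideanSpace ℝ (Fin n)), ?_, ?_⟩
    · intro h
      have h2 := congrArg (fun x : EuclideanSpace ℝ (Fin n) => x u0) h
      simp only [PiLp.toLp_apply, PiLp.zero_apply, if_pos rfl, if_neg hvne] at h2
      norm_num at h2
    · simp only [PiLp.toLp_apply]
      rw [Finset.sum_sub_distrib]
      simp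
  have hKne : K.Nonempty := by
    obtain ⟨g, hg0, hgs⟩ := hg
    exact ⟨_, hmem g hg0 hgs⟩
  -- minimizers
  have hminex : ∀ c : ℝ, ∃ l ∈ K, ∀ y ∈ K, qf c l ≤ qf c y := by
    intro c
    obtain ⟨l, hlK, hmin⟩ := hKc.exists_isMinOn hKne (hqc c).continuousOn
    exact ⟨l, hlK, fun y hy => hmin hy⟩
  choose xm hxmK hxmLe using hminex
  set m : ℝ → ℝ := fun c => qf c (xm c) with hm
  -- coordinate bound on K
  have hcb : ∀ l : EuclideanSpace ℝ (Fin n), l ∈ K → ∀ i, |l i| ≤ 1 := by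
    intro l hl i
    have h1 : l i ^ 2 ≤ ∑ j, l j ^ 2 := by
      apply Finset.single_le_sum (fun j _ => sq_nonneg (l j)) (Finset.mem_univ i)
    have h2 : ∑ j, l j ^ 2 = 1 := by
      have := hnormsq l
      simp_rw [← sq] at this
      rw [this, hl.2, one_pow]
    nlinarith [abs_nonneg (l i), sq_abs (l i)]
  have hAqb : ∀ l : EuclideanSpace ℝ (Fin n), l ∈ K → |Aq l| ≤ (n:ℝ)^2 := by
    intro l hl
    rw [hAq]
    simp only []
    calc |∑ u, ∑ v, l u * l v * e u v| ≤ ∑ u, |∑ v, l u * l v * e u v| :=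
          Finset.abs_sum_le_sum_abs _ _
      _ ≤ ∑ u : Fin n, ∑ v : Fin n, |l u * l v * e u v| := by
          apply Finset.sum_le_sum
          intro u _
          exact Finset.abs_sum_le_sum_abs _ _
      _ ≤ ∑ _u : Fin n, ∑ _v : Fin n, (1:ℝ) := by
          apply Finset.sum_le_sum
          intro u _
          apply Finset.sum_le_sum
          intro v _
          rw [abs_mul, abs_mul]
          have heb : |e u v| ≤ 1 := by
            rw [he]; dsimp only; split_ifs <;> simp
          have hu := hcb l hl u
          have hv := hcb l hl v
          have h4 : |l u| * |l v| ≤ 1 := mul_le_one₀ hu (abs_nonneg _) hv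
          exact mul_le_one₀ h4 (abs_nonneg _) heb
      _ = (n:ℝ)^2 := by
          simp [Finset.sum_const]
          ring
  -- one-sided Lipschitz
  have hlip : ∀ c c' : ℝ, m c' ≤ m c + |c' - c| * (n:ℝ)^2 := by
    intro c c'
    have h1 : m c' ≤ qf c' (xm c) := hxmLe c' (xm c) (hxmK c)
    have h2 : qf c' (xm c) = qf c (xm c) + (c' - c) * Aq (xm c) := by
      rw [hqf]; ring
    have h3 : (c' - c) * Aq (xm c) ≤ |c' - c| * (n:ℝ)^2 := by
      calc (c' - c) * Aq (xm c) ≤ |(c' - c) * Aq (xm c)| := le_abs_self _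
        _ = |c' - c| * |Aq (xm c)| := abs_mul _ _
        _ ≤ |c' - c| * (n:ℝ)^2 := by
            apply mul_le_mul_of_nonneg_left (hAqb _ (hxmK c)) (abs_nonneg _)
    linarith
  have hmcont : Continuous m := by
    have : LipschitzWith ((n:NNReal)^2) m := by
      apply LipschitzWith.of_dist_le_mul
      intro c c'
      rw [Real.dist_eq, Real.dist_eq]
      have h1 := hlip c c'
      have h2 := hlip c' c
      have h3 : (((n:NNReal)^2 : NNReal) : ℝ) = (n:ℝ)^2 := by push_cast; ring
      rw [h3]
      rw [abs_sub_comm c' c] at h1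
      have hcomm : |c - c'| * (n:ℝ)^2 = (n:ℝ)^2 * |c - c'| := mul_comm _ _
      rw [abs_le]
      constructor
      · linarith
      · linarith
    exact this.continuous
  have hq0 : ∀ l ∈ K, qf 0 l = 1 := by
    intro l hl
    rw [hqf]
    simp only [zero_mul, add_zero]
    rw [hnormsq l, hl.2, one_pow]
  have hm0 : m 0 = 1 := hq0 _ (hxmK 0)
  -- witness vector
  set z : EuclideanSpace ℝ (Fin n) := WithLp.toLp 2 (fun i =>
    (if i = u0 then 1 else 0) + (if i = w0 then 1 else 0) - 2 * (if i = v0 then 1 else 0)) with hz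
  have hzval : ∀ i, z i = (if i = u0 then (1:ℝ) else 0) + (if i = w0 then 1 else 0)
      - 2 * (if i = v0 then 1 else 0) := fun i => rfl
  have hz3 : ∀ g : Fin n → ℝ, ∑ v, z v * g v = g u0 + g w0 - 2 * g v0 := by
    intro g
    have hpt : ∀ v, z v * g v = (if v = u0 then g v else 0) + (if v = w0 then g v else 0)
        - 2 * (if v = v0 then g v else 0) := by
      intro v
      rw [hzval v]
      split_ifs <;> ring
    simp_rw [hpt, Finset.sum_sub_distrib, Finset.sum_add_distrib]
    rw [Finset.sum_ite_eq' Finset.univ u0 g, Finset.sum_ite_eq' Finset.univ w0 g,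
      ← Finset.mul_sum, Finset.sum_ite_eq' Finset.univ v0 g]
    simp
  have hzsum : (∑ i, z i) = 0 := by
    have := hz3 (fun _ => 1)
    simp only [mul_one] at this
    calc (∑ i, z i) = ∑ i, z i * 1 := by simp
      _ = 1 + 1 - 2 * 1 := by rw [hz3 (fun _ => 1)]
      _ = 0 := by ring
  have hzu0 : z u0 = 1 := by
    rw [hzval u0]
    rw [if_pos rfl, if_neg huw, if_neg hvne]
    ring
  have hzw0 : z w0 = 1 := by
    rw [hzval w0]
    rw [if_neg (Ne.symm huw), if_pos rfl, if_neg (Ne.symm hvwne)]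
    ring
  have hzv0 : z v0 = -2 := by
    rw [hzval v0]
    rw [if_neg (Ne.symm hvne), if_neg hvwne, if_pos rfl]
    ring
  have hzne : z ≠ 0 := by
    intro h
    have := congrArg (fun x : EuclideanSpace ℝ (Fin n) => x u0) h
    simp only [PiLp.zero_apply] at this
    rw [hzu0] at this
    norm_num at this
  have hAz : Aq z = -8 := by
    rw [hAq]
    simp only []
    have hout : ∀ u, ∑ v, z u * z v * e u v = z u * (e u u0 + e u w0 - 2 * e u v0) := by
      intro u
      have : ∀ v, z u * z v * e u v = z v * (z u * e u v) := by intro v; ring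
      simp_rw [this]
      rw [hz3 (fun v => z u * e u v)]
      ring
    simp_rw [hout]
    have : ∀ u, z u * (e u u0 + e u w0 - 2 * e u v0)
        = (fun x => (e x u0 + e x w0 - 2 * e x v0)) u * z u := by intro u; ring
    simp_rw [this]
    have hfin : ∑ u, z u * (fun x => (e x u0 + e x w0 - 2 * e x v0)) u
        = (e u0 u0 + e u0 w0 - 2 * e u0 v0) + (e w0 u0 + e w0 w0 - 2 * e w0 v0)
          - 2 * (e v0 u0 + e v0 w0 - 2 * e v0 v0) := hz3 _
    have hcomm : ∑ u, (fun x => (e x u0 + e x w0 - 2 * e x v0)) u * z u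
        = ∑ u, z u * (fun x => (e x u0 + e x w0 - 2 * e x v0)) u := by
      apply Finset.sum_congr rfl; intro u _; ring
    rw [hcomm, hfin]
    have e1 : e u0 u0 = 0 := by rw [he]; simp [SimpleGraph.irrefl]
    have e2 : e u0 w0 = 0 := by rw [he]; simp [hnadj]
    have e3 : e u0 v0 = 1 := by rw [he]; simp [huv]
    have e4 : e w0 u0 = 0 := by
      rw [he]; simp only []
      rw [if_neg (fun h => hnadj (G.adj_symm h))]
    have e5 : e w0 w0 = 0 := by rw [he]; simp [SimpleGraph.irrefl]
    have e6 : e w0 v0 = 1 := by rw [he]; simp [G.adj_symm hvw]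
    have e7 : e v0 u0 = 1 := by rw [he]; simp [G.adj_symm huv]
    have e8 : e v0 w0 = 1 := by rw [he]; simp [hvw]
    have e9 : e v0 v0 = 0 := by rw [he]; simp [SimpleGraph.irrefl]
    rw [e1, e2, e3, e4, e5, e6, e7, e8, e9]
    ring
  have hzz : ∑ i, z i * z i = 6 := by
    rw [hz3 z, hzu0, hzw0, hzv0]
    ring
  have hqz : qf 1 z = -2 := by
    rw [hqf]
    simp only []
    rw [show ∑ i, z i * z i + 1 * Aq z = ∑ i, z i * z i + Aq z by ring, hzz, hAz]
    norm_num
  have hm1 : m 1 < 0 := by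
    have hmemz := hmem z hzne hzsum
    have hle := hxmLe 1 _ hmemz
    have : qf 1 (‖z‖⁻¹ • z) = (‖z‖⁻¹)^2 * qf 1 z := hom 1 (‖z‖⁻¹) z
    rw [this, hqz] at hle
    have hznorm : 0 < ‖z‖ := norm_pos_iff.mpr hzne
    have hpos : 0 < (‖z‖⁻¹)^2 := by positivity
    calc m 1 ≤ (‖z‖⁻¹)^2 * (-2) := hle
      _ < 0 := by nlinarith
  -- IVT
  have hivt : ∃ c ∈ Set.Icc (0:ℝ) 1, m c = 0 := by
    have hsub := intermediate_value_Icc' (le_of_lt one_pos) hmcont.continuousOn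
    have h0mem : (0:ℝ) ∈ Set.Icc (m 1) (m 0) := by
      rw [hm0]
      exact ⟨le_of_lt hm1, zero_le_one⟩
    obtain ⟨c, hc, hmc⟩ := hsub h0mem
    exact ⟨c, hc, hmc⟩
  obtain ⟨cs, hcs01, hmcs⟩ := hivt
  have hcs0 : cs ≠ 0 := by
    intro h; rw [h, hm0] at hmcs; norm_num at hmcs
  have hcs1 : cs ≠ 1 := by
    intro h; rw [h] at hmcs; rw [hmcs] at hm1; norm_num at hm1
  have hcspos : 0 < cs := lt_of_le_of_ne hcs01.1 (Ne.symm hcs0)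
  have hcslt : cs < 1 := lt_of_le_of_ne hcs01.2 hcs1
  -- the distance-squared function
  set d : Fin n → Fin n → ℝ :=
    fun u v => if u = v then 0 else (if G.Adj u v then 1 - cs else 1) with hd
  have hdpt : ∀ u v : Fin n, d u v
      = (if u = v then (0:ℝ) else 1) - cs * e u v := by
    intro u v
    rw [hd, he]
    by_cases h : u = v
    · subst h
      simp [SimpleGraph.irrefl]
    · by_cases hadj : G.Adj u v
      · simp [h, hadj]
      · simp [h, hadj]
  have hQ : ∀ l : Fin n → ℝ, ∑ u, ∑ v, l u * l v * d u v
      = ((∑ u, l u) * (∑ v, l v) - ∑ u, l u * l u) - cs * (∑ u, ∑ v, l u * l v * e u v) := by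
    intro l
    have hpt : ∀ u v : Fin n, l u * l v * d u v
        = (l u * l v * 1 - l u * l v * (if u = v then (1:ℝ) else 0))
          - cs * (l u * l v * e u v) := by
      intro u v
      rw [hdpt u v]
      by_cases h : u = v <;> simp [h] <;> ring
    simp_rw [hpt, Finset.sum_sub_distrib, ← Finset.mul_sum]
    rw [ES.sum_sum_const l 1, ES.sum_sum_diag l]
    ring
  have hnegK : ∀ L : EuclideanSpace ℝ (Fin n), (∑ i, L i) = 0 → 0 ≤ qf cs L := by
    intro L hsL
    by_cases hL0 : L = 0
    · subst hL0
      have hz1 : ∀ i : Fin n, (0 : EuclideanSpace ℝ (Fin n)) i = 0 := fun i => rfl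
      rw [hqf]
      simp only []
      rw [hAq]
      simp only []
      simp_rw [hz1]
      simp
    · have ht : ‖L‖ ≠ 0 := norm_ne_zero_iff.mpr hL0
      have hrec : L = ‖L‖ • (‖L‖⁻¹ • L) := (smul_inv_smul₀ ht L).symm
      have hu : (‖L‖⁻¹ • L) ∈ K := hmem L hL0 hsL
      calc (0:ℝ) = ‖L‖^2 * m cs := by rw [hmcs]; ring
        _ ≤ ‖L‖^2 * qf cs (‖L‖⁻¹ • L) := by
            apply mul_le_mul_of_nonneg_left (hxmLe cs _ hu) (sq_nonneg _)
        _ = qf cs (‖L‖ • (‖L‖⁻¹ • L)) := (hom cs ‖L‖ _).symm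
        _ = qf cs L := by rw [← hrec]
  have hQle : ∀ l : Fin n → ℝ, (∑ i, l i) = 0 → (∑ u, ∑ v, l u * l v * d u v) ≤ 0 := by
    intro l hsl
    rw [hQ l, hsl]
    have h0 := hnegK (WithLp.toLp 2 l) hsl
    rw [hqf] at h0
    simp only [] at h0
    rw [hAq] at h0
    simp only [WithLp.ofLp_toLp] at h0
    linarith
  have hlamK := hxmK cs
  have hlamne : xm cs ≠ 0 := by
    intro h
    have := hlamK.2
    rw [h, norm_zero] at this
    norm_num at this
  have hlamQ : (∑ u, ∑ v, (xm cs) u * (xm cs) v * d u v) = 0 := by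
    have hq2 := hQ (fun i => (xm cs) i)
    simp only [] at hq2
    rw [hq2, hlamK.1]
    have h0 : qf cs (xm cs) = 0 := hmcs
    rw [hqf] at h0
    simp only [] at h0
    rw [hAq] at h0
    simp only [] at h0
    linarith
  have hembed := ES.embed (n := n) (k := n - 2) d
    (by intro u v
        rw [hd]
        by_cases h : u = v
        · simp [h]
        · have h2 : ¬ (v = u) := fun hh => h hh.symm
          simp only [if_neg h, if_neg h2]
          by_cases hadj : G.Adj u v
          · rw [if_pos hadj, if_pos (G.adj_symm hadj)]
          · rw [if_neg hadj, if_neg (fun hh => hadj (G.adj_symm hh))])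
    (by intro u; rw [hd]; simp)
    hQle
    (Or.inr ⟨xm cs, (by simpa using hlamne), hlamK.1, hlamQ, by
      have hcard : 3 ≤ n := by
        have : ({u0, v0, w0} : Finset (Fin n)).card = 3 := by
          rw [Finset.card_insert_of_notMem (by simp [hvne, huw]),
            Finset.card_insert_of_notMem (by simp [hvwne]), Finset.card_singleton]
        calc 3 = ({u0, v0, w0} : Finset (Fin n)).card := this.symm
          _ ≤ (Finset.univ : Finset (Fin n)).card := Finset.card_le_univ _
          _ = n := by simp
      omega⟩)
  obtain ⟨f, hfd⟩ := hembed
  have hrep : HasTwoDistRep G (n - 2) := by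
    refine ⟨Real.sqrt (1 - cs), 1, Real.sqrt_pos.mpr (by linarith), ?_, f, ?_⟩
    · calc Real.sqrt (1 - cs) ≤ Real.sqrt 1 := Real.sqrt_le_sqrt (by linarith)
        _ = 1 := Real.sqrt_one
    · intro u v huvne
      have h2 := hfd u v
      rw [hd] at h2
      simp only [if_neg huvne] at h2
      by_cases hadj : G.Adj u v
      · rw [if_pos hadj] at h2
        rw [if_pos hadj]
        apply ES.eq_of_sq_eq_sq dist_nonneg (Real.sqrt_nonneg _)
        rw [h2, Real.sq_sqrt (by linarith)]
      · rw [if_neg hadj] at h2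
        rw [if_neg hadj]
        apply ES.eq_of_sq_eq_sq dist_nonneg zero_le_one
        rw [h2, one_pow]
  exact hrep
/-- Einhorn–Schoenberg: `dim₂(G) = n − 1` if and only if `G` is a disjoint
union of cliques (i.e. adjacency is transitive on distinct vertices). -/
theorem einhorn_schoenberg {n : ℕ} (G : SimpleGraph (Fin n)) [DecidableRel G.Adj] :
    dimTwo G = n - 1 ↔
      ∀ u v w : Fin n, G.Adj u v → G.Adj v w → u ≠ w → G.Adj u w := by
  constructor
  · intro h u v w huv hvw huw
    by_contra hnadj
    have hrep := ES.upper2 G u v w huv hvw huw hnadj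
    have hle : dimTwo G ≤ n - 2 := Nat.sInf_le hrep
    have h3 : ({u, v, w} : Finset (Fin n)).card = 3 := by
      rw [Finset.card_insert_of_notMem (by simp [G.ne_of_adj huv, huw]),
        Finset.card_insert_of_notMem (by simp [G.ne_of_adj hvw]), Finset.card_singleton]
    have hn3 : 3 ≤ n := by
      calc 3 = ({u, v, w} : Finset (Fin n)).card := h3.symm
        _ ≤ (Finset.univ : Finset (Fin n)).card := Finset.card_le_univ _
        _ = n := by simp
    omega
  · intro htrans
    have hub : HasTwoDistRep G (n - 1) := ES.upper1 G
    apply le_antisymm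
    · exact Nat.sInf_le hub
    · show n - 1 ≤ sInf {d : ℕ | HasTwoDistRep G d}
      apply le_csInf (⟨n - 1, hub⟩ : Set.Nonempty {d : ℕ | HasTwoDistRep G d})
      intro d2 hd2
      have hd' : HasTwoDistRep G d2 := hd2
      have := ES.lower G htrans hd'
      omega
end

section
/- A two-distance set in ℝ^d has at most (d+1)(d+2)/2 points. -/
open Finset

private lemma quartic_aux (c4 c3 c2 c1 c0 : ℝ)
    (h : ∀ t : ℝ, c4*t^4 + c3*t^3 + c2*t^2 + c1*t + c0 = 0) : c4 = 0 ∧ c3 = 0 := by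
  have h0 := h 0
  have h1 := h 1
  have h2 := h (-1)
  have h3 := h 2
  have h4 := h (-2)
  norm_num at h0 h1 h2 h3 h4
  constructor <;> linarith

private lemma dist_sq_eq (d : ℕ) (x q : EuclideanSpace ℝ (Fin d)) :
    dist x q ^ 2 = ∑ i, (x i - q i)^2 := by
  have h : (∑ i, dist (x i) (q i) ^ 2) = ∑ i, (x i - q i)^2 :=
    Finset.sum_congr rfl fun i _ => by rw [Real.dist_eq, sq_abs]
  rw [EuclideanSpace.dist_eq, h, Real.sq_sqrt]
  positivity

private noncomputable def Fpoly (d : ℕ) (a b : ℝ) (q x : EuclideanSpace ℝ (Fin d)) : ℝ :=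
  (dist x q ^ 2 - a^2) * (dist x q ^ 2 - b^2)

private noncomputable def ffam (d : ℕ) (a b : ℝ) (S : Finset (EuclideanSpace ℝ (Fin d))) :
    (↥S ⊕ (Fin d ⊕ Unit)) → EuclideanSpace ℝ (Fin d) → ℝ :=
  Sum.elim (fun q => Fpoly d a b (↑q))
    (Sum.elim (fun i => fun x => x i) (fun _ => fun _ => 1))

private lemma ffam_indep (d : ℕ) (hd : 0 < d) (S : Finset (EuclideanSpace ℝ (Fin d)))
    (a b : ℝ) (hab : a^2 * b^2 ≠ 0)
    (h : ∀ x ∈ S, ∀ y ∈ S, x ≠ y → dist x y = a ∨ dist x y = b) :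
    LinearIndependent ℝ (ffam d a b S) := by
  classical
  rw [Fintype.linearIndependent_iff]
  intro g hg
  have main : ∀ x : EuclideanSpace ℝ (Fin d),
      (∑ q : ↥S, g (Sum.inl q) * Fpoly d a b (↑q) x)
        + ((∑ i, g (Sum.inr (Sum.inl i)) * x i) + g (Sum.inr (Sum.inr ()))) = 0 := by
    intro x
    have hx := congrFun hg x
    simpa [ffam, Fintype.sum_sum_type] using hx
  -- coefficient extraction along a direction y
  have quart : ∀ y : Fin d → ℝ,
      ((∑ q : ↥S, g (Sum.inl q)) * (∑ i, (y i)^2)^2 = 0) ∧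
      ((∑ i, (y i)^2) * (∑ q : ↥S, g (Sum.inl q)
          * (∑ i, y i * (q : EuclideanSpace ℝ (Fin d)) i)) = 0) := by
    intro y
    set yE : EuclideanSpace ℝ (Fin d) := (WithLp.equiv 2 (Fin d → ℝ)).symm y with hyEdef
    have hyEi : ∀ i, yE i = y i := fun i => rfl
    set r : ℝ := ∑ i, (y i)^2 with hr
    have hdist : ∀ (t : ℝ) (q : ↥S),
        (∑ i, ((t • yE) i - (q : EuclideanSpace ℝ (Fin d)) i)^2)
          = t^2*r - 2*t*(∑ i, y i * (q : EuclideanSpace ℝ (Fin d)) i)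
            + (∑ i, ((q : EuclideanSpace ℝ (Fin d)) i)^2) := by
      intro t q
      have hterm : ∀ i ∈ univ, ((t • yE) i - (q : EuclideanSpace ℝ (Fin d)) i)^2
          = t^2 * (y i)^2 - (2*t) * (y i * (q : EuclideanSpace ℝ (Fin d)) i)
            + ((q : EuclideanSpace ℝ (Fin d)) i)^2 := by
        intro i _
        have hsm : (t • yE) i = t * y i := by
          rw [PiLp.smul_apply, hyEi i, smul_eq_mul]
        rw [hsm]; ring
      rw [Finset.sum_congr rfl hterm, Finset.sum_add_distrib, Finset.sum_sub_distrib,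
        ← Finset.mul_sum, ← Finset.mul_sum, hr]
    have key : ∀ t : ℝ,
        (∑ q : ↥S, g (Sum.inl q) * r^2) * t^4
      + (∑ q : ↥S, g (Sum.inl q)
          * (-4*r*(∑ i, y i * (q : EuclideanSpace ℝ (Fin d)) i))) * t^3
      + (∑ q : ↥S, g (Sum.inl q)
          * (2*r*(∑ i, ((q : EuclideanSpace ℝ (Fin d)) i)^2) - (a^2+b^2)*r
            + 4*(∑ i, y i * (q : EuclideanSpace ℝ (Fin d)) i)^2)) * t^2
      + ((∑ q : ↥S, g (Sum.inl q)
          * ((-2*(∑ i, y i * (q : EuclideanSpace ℝ (Fin d)) i))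
            * (((∑ i, ((q : EuclideanSpace ℝ (Fin d)) i)^2) - a^2)
              + ((∑ i, ((q : EuclideanSpace ℝ (Fin d)) i)^2) - b^2))))
          + (∑ i, g (Sum.inr (Sum.inl i)) * y i)) * t
      + ((∑ q : ↥S, g (Sum.inl q)
          * ((((∑ i, ((q : EuclideanSpace ℝ (Fin d)) i)^2) - a^2)
            * (((∑ i, ((q : EuclideanSpace ℝ (Fin d)) i)^2) - b^2)))))
          + g (Sum.inr (Sum.inr ()))) = 0 := by
      intro t
      have hm := main (t • yE)
      have hFq : ∀ q : ↥S, g (Sum.inl q) * Fpoly d a b (↑q) (t • yE)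
          = (g (Sum.inl q) * r^2)*t^4
            + (g (Sum.inl q) * (-4*r*(∑ i, y i * (q : EuclideanSpace ℝ (Fin d)) i)))*t^3
            + (g (Sum.inl q) * (2*r*(∑ i, ((q : EuclideanSpace ℝ (Fin d)) i)^2) - (a^2+b^2)*r
                + 4*(∑ i, y i * (q : EuclideanSpace ℝ (Fin d)) i)^2))*t^2
            + (g (Sum.inl q) * ((-2*(∑ i, y i * (q : EuclideanSpace ℝ (Fin d)) i))
                * (((∑ i, ((q : EuclideanSpace ℝ (Fin d)) i)^2) - a^2)
                  + ((∑ i, ((q : EuclideanSpace ℝ (Fin d)) i)^2) - b^2))))*t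
            + (g (Sum.inl q) * ((((∑ i, ((q : EuclideanSpace ℝ (Fin d)) i)^2) - a^2)
                * (((∑ i, ((q : EuclideanSpace ℝ (Fin d)) i)^2) - b^2))))) := by
        intro q
        have hF : Fpoly d a b (↑q) (t • yE)
            = (t^2*r - 2*t*(∑ i, y i * (q : EuclideanSpace ℝ (Fin d)) i)
                + (∑ i, ((q : EuclideanSpace ℝ (Fin d)) i)^2) - a^2)
              * (t^2*r - 2*t*(∑ i, y i * (q : EuclideanSpace ℝ (Fin d)) i)
                + (∑ i, ((q : EuclideanSpace ℝ (Fin d)) i)^2) - b^2) := by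
          rw [Fpoly, dist_sq_eq, hdist t q]
        rw [hF]; ring
      have hsum1 : (∑ q : ↥S, g (Sum.inl q) * Fpoly d a b (↑q) (t • yE))
          = (∑ q : ↥S, g (Sum.inl q) * r^2) * t^4
          + (∑ q : ↥S, g (Sum.inl q)
              * (-4*r*(∑ i, y i * (q : EuclideanSpace ℝ (Fin d)) i))) * t^3
          + (∑ q : ↥S, g (Sum.inl q)
              * (2*r*(∑ i, ((q : EuclideanSpace ℝ (Fin d)) i)^2) - (a^2+b^2)*r
                + 4*(∑ i, y i * (q : EuclideanSpace ℝ (Fin d)) i)^2)) * t^2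
          + (∑ q : ↥S, g (Sum.inl q)
              * ((-2*(∑ i, y i * (q : EuclideanSpace ℝ (Fin d)) i))
                * (((∑ i, ((q : EuclideanSpace ℝ (Fin d)) i)^2) - a^2)
                  + ((∑ i, ((q : EuclideanSpace ℝ (Fin d)) i)^2) - b^2)))) * t
          + (∑ q : ↥S, g (Sum.inl q)
              * ((((∑ i, ((q : EuclideanSpace ℝ (Fin d)) i)^2) - a^2)
                * (((∑ i, ((q : EuclideanSpace ℝ (Fin d)) i)^2) - b^2))))) := by
        rw [Finset.sum_congr rfl (fun q _ => hFq q)]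
        simp only [Finset.sum_add_distrib, ← Finset.sum_mul]
      have hlin : (∑ i, g (Sum.inr (Sum.inl i)) * ((t • yE) i))
          = (∑ i, g (Sum.inr (Sum.inl i)) * y i) * t := by
        rw [Finset.sum_mul]
        refine Finset.sum_congr rfl fun i _ => ?_
        have hsm : (t • yE) i = t * y i := by
          rw [PiLp.smul_apply, hyEi i, smul_eq_mul]
        rw [hsm]; ring
      linear_combination hm - hsum1 - hlin
    obtain ⟨h4, h3⟩ := quartic_aux _ _ _ _ _ key
    constructor
    · rw [← Finset.sum_mul] at h4
      exact h4
    · have hfac : (∑ q : ↥S, g (Sum.inl q)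
          * (-4*r*(∑ i, y i * (q : EuclideanSpace ℝ (Fin d)) i)))
          = (-4) * (r * (∑ q : ↥S, g (Sum.inl q)
            * (∑ i, y i * (q : EuclideanSpace ℝ (Fin d)) i))) := by
        calc (∑ q : ↥S, g (Sum.inl q)
            * (-4*r*(∑ i, y i * (q : EuclideanSpace ℝ (Fin d)) i)))
            = ∑ q : ↥S, (-4:ℝ) * (r * (g (Sum.inl q)
                * (∑ i, y i * (q : EuclideanSpace ℝ (Fin d)) i))) :=
              Finset.sum_congr rfl fun q _ => by ring
          _ = (-4) * ∑ q : ↥S, r * (g (Sum.inl q)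
                * (∑ i, y i * (q : EuclideanSpace ℝ (Fin d)) i)) := by
              rw [← Finset.mul_sum]
          _ = (-4) * (r * (∑ q : ↥S, g (Sum.inl q)
                * (∑ i, y i * (q : EuclideanSpace ℝ (Fin d)) i))) := by
              rw [← Finset.mul_sum]
      rw [hfac] at h3
      linarith
  -- first coefficient: sum of lambdas vanishes
  have hsum_lam : (∑ q : ↥S, g (Sum.inl q)) = 0 := by
    have h1 := (quart (Pi.single (⟨0, hd⟩ : Fin d) (1:ℝ))).1
    have hr1 : (∑ i, ((Pi.single (⟨0, hd⟩ : Fin d) (1:ℝ) : Fin d → ℝ) i)^2) = (1:ℝ) := by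
      have hterm : ∀ i ∈ univ, ((Pi.single (⟨0, hd⟩ : Fin d) (1:ℝ) : Fin d → ℝ) i)^2
          = if i = (⟨0, hd⟩ : Fin d) then (1:ℝ) else 0 := by
        intro i _
        rcases eq_or_ne i (⟨0, hd⟩ : Fin d) with hi | hi
        · rw [if_pos hi, hi, Pi.single_eq_same]; norm_num
        · rw [if_neg hi, Pi.single_eq_of_ne hi]; norm_num
      rw [Finset.sum_congr rfl hterm, Finset.sum_ite_eq' univ _ (fun _ => (1:ℝ))]
      simp
    rw [hr1] at h1
    simpa using h1
  -- B : weighted sum with mu vanishes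
  have hB : (∑ q : ↥S, g (Sum.inl q)
      * (∑ i, g (Sum.inr (Sum.inl i)) * (q : EuclideanSpace ℝ (Fin d)) i)) = 0 := by
    have h2 := (quart (fun i => g (Sum.inr (Sum.inl i)))).2
    rcases eq_or_ne (∑ i, (g (Sum.inr (Sum.inl i)))^2) 0 with hz | hz
    · have hmu0 : ∀ i : Fin d, g (Sum.inr (Sum.inl i)) = 0 := by
        intro i
        have hnn : ∀ j ∈ univ, (0:ℝ) ≤ (g (Sum.inr (Sum.inl j)))^2 := fun j _ => sq_nonneg _
        have := (Finset.sum_eq_zero_iff_of_nonneg hnn).mp hz i (mem_univ i)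
        exact pow_eq_zero_iff two_ne_zero |>.mp this
      refine Finset.sum_eq_zero fun q _ => ?_
      have : (∑ i, g (Sum.inr (Sum.inl i)) * (q : EuclideanSpace ℝ (Fin d)) i) = 0 :=
        Finset.sum_eq_zero fun i _ => by rw [hmu0 i, zero_mul]
      rw [this, mul_zero]
    · exact (mul_eq_zero.mp h2).resolve_left hz
  -- evaluation at points of S
  have heval : ∀ q' : ↥S, g (Sum.inl q') * (a^2*b^2)
      + ((∑ i, g (Sum.inr (Sum.inl i)) * (q' : EuclideanSpace ℝ (Fin d)) i)
        + g (Sum.inr (Sum.inr ()))) = 0 := by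
    intro q'
    have hm := main (q' : EuclideanSpace ℝ (Fin d))
    have hsum : (∑ q : ↥S, g (Sum.inl q) * Fpoly d a b (↑q) (↑q'))
        = g (Sum.inl q') * (a^2*b^2) := by
      rw [Fintype.sum_eq_single q' (fun q hq => ?_)]
      · have hself : Fpoly d a b (↑q') (↑q') = a^2*b^2 := by
          rw [Fpoly, dist_self]; ring
        rw [hself]
      · have hne : (q' : EuclideanSpace ℝ (Fin d)) ≠ (q : EuclideanSpace ℝ (Fin d)) :=
          fun e => hq (Subtype.ext e.symm)
        rcases h (↑q') q'.2 (↑q) q.2 hne with hd' | hd' <;>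
          · rw [Fpoly, hd']; ring
    rw [hsum] at hm
    exact hm
  -- conclude lambdas vanish
  have hlam0 : ∀ q : ↥S, g (Sum.inl q) = 0 := by
    have hs2 : (∑ q : ↥S, (g (Sum.inl q))^2) * (a^2*b^2) = 0 := by
      have hterm : ∀ q' ∈ univ, (g (Sum.inl q'))^2 * (a^2*b^2)
          = -(g (Sum.inl q') * (∑ i, g (Sum.inr (Sum.inl i))
              * (q' : EuclideanSpace ℝ (Fin d)) i))
            - g (Sum.inl q') * g (Sum.inr (Sum.inr ())) := by
        intro q' _
        linear_combination g (Sum.inl q') * heval q'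
      rw [Finset.sum_mul, Finset.sum_congr rfl hterm, Finset.sum_sub_distrib]
      have e1 : (∑ q : ↥S, -(g (Sum.inl q) * (∑ i, g (Sum.inr (Sum.inl i))
          * (q : EuclideanSpace ℝ (Fin d)) i))) = 0 := by
        rw [Finset.sum_neg_distrib, hB, neg_zero]
      have e2 : (∑ q : ↥S, g (Sum.inl q) * g (Sum.inr (Sum.inr ()))) = 0 := by
        rw [← Finset.sum_mul, hsum_lam, zero_mul]
      rw [e1, e2, sub_zero]
    have hsz : (∑ q : ↥S, (g (Sum.inl q))^2) = 0 :=
      (mul_eq_zero.mp hs2).resolve_right hab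
    intro q
    have hnn : ∀ j ∈ univ, (0:ℝ) ≤ (g (Sum.inl j))^2 := fun j _ => sq_nonneg _
    have := (Finset.sum_eq_zero_iff_of_nonneg hnn).mp hsz q (mem_univ q)
    exact pow_eq_zero_iff two_ne_zero |>.mp this
  -- linear part vanishes
  have hmain2 : ∀ x : EuclideanSpace ℝ (Fin d),
      (∑ i, g (Sum.inr (Sum.inl i)) * x i) + g (Sum.inr (Sum.inr ())) = 0 := by
    intro x
    have hm := main x
    have hz : (∑ q : ↥S, g (Sum.inl q) * Fpoly d a b (↑q) x) = 0 :=
      Finset.sum_eq_zero fun q _ => by rw [hlam0 q, zero_mul]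
    rw [hz, zero_add] at hm
    exact hm
  have hcc0 : g (Sum.inr (Sum.inr ())) = 0 := by
    have := hmain2 0
    simpa using this
  have hmu0 : ∀ j : Fin d, g (Sum.inr (Sum.inl j)) = 0 := by
    intro j
    have hx := hmain2 ((WithLp.equiv 2 (Fin d → ℝ)).symm (Pi.single j 1))
    rw [hcc0, add_zero] at hx
    have hterm : ∀ i ∈ univ, g (Sum.inr (Sum.inl i))
        * ((WithLp.equiv 2 (Fin d → ℝ)).symm (Pi.single j (1:ℝ))) i
        = if i = j then g (Sum.inr (Sum.inl i)) else 0 := by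
      intro i _
      rw [WithLp.equiv_symm_apply, PiLp.toLp_apply]
      rcases eq_or_ne i j with hi | hi
      · rw [if_pos hi, hi, Pi.single_eq_same, mul_one]
      · rw [if_neg hi, Pi.single_eq_of_ne hi, mul_zero]
    rw [Finset.sum_congr rfl hterm, Finset.sum_ite_eq' univ j
      (fun i => g (Sum.inr (Sum.inl i)))] at hx
    simpa using hx
  rintro (q | i | ⟨⟩)
  · exact hlam0 q
  · exact hmu0 i
  · exact hcc0

private lemma two_dist_main (d : ℕ) (hd : 0 < d) (S : Finset (EuclideanSpace ℝ (Fin d)))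
    (a b : ℝ) (ha : a ≠ 0) (hb : b ≠ 0)
    (h : ∀ x ∈ S, ∀ y ∈ S, x ≠ y → dist x y = a ∨ dist x y = b) :
    S.card ≤ (d + 1) * (d + 2) / 2 := by
  classical
  let u : EuclideanSpace ℝ (Fin d) → ℝ := fun x => ∑ i, (x i)^2
  let v : ({p : Fin d × Fin d // p.1 ≤ p.2} ⊕ (Fin d ⊕ (Fin d ⊕ (Unit ⊕ Unit)))) → (EuclideanSpace ℝ (Fin d) → ℝ) :=
    Sum.elim (fun p => fun x => x p.1.1 * x p.1.2)
      (Sum.elim (fun i => fun x => u x * x i)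
        (Sum.elim (fun i => fun x => x i)
          (Sum.elim (fun _ => fun x => (u x)^2) (fun _ => fun _ => 1))))
  let V : Submodule ℝ (EuclideanSpace ℝ (Fin d) → ℝ) := Submodule.span ℝ (Set.range v)
  have hG2 : ∀ p : Fin d × Fin d, (fun x : EuclideanSpace ℝ (Fin d) => x p.1 * x p.2) ∈ V := by
    intro p
    rcases le_total p.1 p.2 with hp | hp
    · exact Submodule.subset_span ⟨Sum.inl ⟨(p.1, p.2), hp⟩, rfl⟩
    · have hcomm : (fun x : EuclideanSpace ℝ (Fin d) => x p.1 * x p.2)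
          = fun x => x p.2 * x p.1 := funext fun x => mul_comm _ _
      rw [hcomm]
      exact Submodule.subset_span ⟨Sum.inl ⟨(p.2, p.1), hp⟩, rfl⟩
  have hFmem : ∀ q : EuclideanSpace ℝ (Fin d), Fpoly d a b q ∈ V := by
    intro q
    set w : ℝ := ∑ i, (q i)^2 with hw
    have hrepr : Fpoly d a b q =
        (fun x => (u x)^2)
        + (∑ i, (-4 * q i) • (fun x : EuclideanSpace ℝ (Fin d) => u x * x i))
        + (∑ p : Fin d × Fin d, ((4 * q p.1 * q p.2)
            + (if p.1 = p.2 then (w - a^2) + (w - b^2) else 0)) •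
              (fun x : EuclideanSpace ℝ (Fin d) => x p.1 * x p.2))
        + (∑ i, (-2 * q i * ((w - a^2) + (w - b^2))) • (fun x : EuclideanSpace ℝ (Fin d) => x i))
        + ((w - a^2)*(w - b^2)) • (fun _ : EuclideanSpace ℝ (Fin d) => (1:ℝ)) := by
      funext x
      simp only [Fpoly, Pi.add_apply, Finset.sum_apply, Pi.smul_apply, smul_eq_mul]
      rw [dist_sq_eq]
      set s : ℝ := ∑ i, q i * x i with hs
      have h1 : (∑ i, (x i - q i)^2) = u x - 2*s + w := by
        have hterm : ∀ i ∈ univ, (x i - q i)^2 = (x i)^2 - 2*(q i * x i) + (q i)^2 :=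
          fun i _ => by ring
        rw [Finset.sum_congr rfl hterm, Finset.sum_add_distrib, Finset.sum_sub_distrib,
          ← Finset.mul_sum]
      have h2 : (∑ i, (-4 * q i) * (u x * x i)) = -4 * u x * s := by
        have hterm : ∀ i ∈ univ, (-4 * q i) * (u x * x i) = (-4 * u x) * (q i * x i) :=
          fun i _ => by ring
        rw [Finset.sum_congr rfl hterm, ← Finset.mul_sum, hs]
      have h3 : (∑ p : Fin d × Fin d, ((4 * q p.1 * q p.2)
            + (if p.1 = p.2 then (w - a^2) + (w - b^2) else 0)) * (x p.1 * x p.2))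
          = 4*s^2 + ((w - a^2) + (w - b^2)) * u x := by
        have hsplit : ∀ p : Fin d × Fin d, ((4 * q p.1 * q p.2)
              + (if p.1 = p.2 then (w - a^2) + (w - b^2) else 0)) * (x p.1 * x p.2)
            = 4 * ((q p.1 * x p.1) * (q p.2 * x p.2))
              + (if p.1 = p.2 then ((w - a^2) + (w - b^2)) * (x p.1 * x p.2) else 0) := by
          intro p
          rcases eq_or_ne p.1 p.2 with hp | hp
          · rw [if_pos hp, if_pos hp]; ring
          · rw [if_neg hp, if_neg hp]; ring
        rw [Finset.sum_congr rfl (fun p _ => hsplit p), Finset.sum_add_distrib]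
        congr 1
        · rw [← Finset.mul_sum]
          have hss : (∑ p : Fin d × Fin d, q p.1 * x p.1 * (q p.2 * x p.2)) = s * s := by
            rw [Fintype.sum_prod_type, hs, Finset.sum_mul_sum]
          rw [hss]
          ring
        · rw [Fintype.sum_prod_type]
          have hinner : ∀ i : Fin d, (∑ j : Fin d,
              if i = j then ((w - a^2) + (w - b^2)) * (x i * x j) else 0)
              = ((w - a^2) + (w - b^2)) * (x i * x i) := by
            intro i
            rw [Finset.sum_ite_eq]
            simp
          rw [Finset.sum_congr rfl (fun i _ => hinner i), ← Finset.mul_sum]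
          have : (∑ i, x i * x i) = u x := by
            exact Finset.sum_congr rfl fun i _ => by ring
          rw [this]
      have h4 : (∑ i, (-2 * q i * ((w - a^2) + (w - b^2))) * x i)
          = -2 * ((w - a^2) + (w - b^2)) * s := by
        have hterm : ∀ i ∈ univ, (-2 * q i * ((w - a^2) + (w - b^2))) * x i
            = (-2 * ((w - a^2) + (w - b^2))) * (q i * x i) := fun i _ => by ring
        rw [Finset.sum_congr rfl hterm, ← Finset.mul_sum]
      rw [h1, h2, h3, h4]
      ring
    rw [hrepr]
    refine Submodule.add_mem _ (Submodule.add_mem _ (Submodule.add_mem _ (Submodule.add_mem _ ?_ ?_) ?_) ?_) ?_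
    · exact Submodule.subset_span ⟨Sum.inr (Sum.inr (Sum.inr (Sum.inl ()))), rfl⟩
    · exact Submodule.sum_mem _ fun i _ => Submodule.smul_mem _ _
        (Submodule.subset_span ⟨Sum.inr (Sum.inl i), rfl⟩)
    · exact Submodule.sum_mem _ fun p _ => Submodule.smul_mem _ _ (hG2 p)
    · exact Submodule.sum_mem _ fun i _ => Submodule.smul_mem _ _
        (Submodule.subset_span ⟨Sum.inr (Sum.inr (Sum.inl i)), rfl⟩)
    · exact Submodule.smul_mem _ _
        (Submodule.subset_span ⟨Sum.inr (Sum.inr (Sum.inr (Sum.inr ()))), rfl⟩)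
  have hmem : ∀ i, ffam d a b S i ∈ V := by
    rintro (q | i | ⟨⟩)
    · exact hFmem _
    · exact Submodule.subset_span ⟨Sum.inr (Sum.inr (Sum.inl i)), rfl⟩
    · exact Submodule.subset_span ⟨Sum.inr (Sum.inr (Sum.inr (Sum.inr ()))), rfl⟩
  have hind : LinearIndependent ℝ (ffam d a b S) :=
    ffam_indep d hd S a b (mul_ne_zero (pow_ne_zero 2 ha) (pow_ne_zero 2 hb)) h
  -- conclude
  have hfin : FiniteDimensional ℝ V := FiniteDimensional.span_of_finite ℝ (Set.finite_range v)
  let fV : (↥S ⊕ (Fin d ⊕ Unit)) → V := fun i => ⟨ffam d a b S i, hmem i⟩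
  have hindV : LinearIndependent ℝ fV := by
    apply LinearIndependent.of_comp V.subtype
    exact hind
  have hcard1 : Fintype.card (↥S ⊕ (Fin d ⊕ Unit)) ≤ Module.finrank ℝ V := by
    haveI := hfin
    exact hindV.fintype_card_le_finrank
  have hcard2 : Module.finrank ℝ V ≤ Fintype.card ({p : Fin d × Fin d // p.1 ≤ p.2} ⊕ (Fin d ⊕ (Fin d ⊕ (Unit ⊕ Unit)))) := by
    have := finrank_range_le_card (R := ℝ) v
    rwa [Set.finrank] at this
  have hsub : Fintype.card {p : Fin d × Fin d // p.1 ≤ p.2} = (d+1).choose 2 := by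
    rw [← Fintype.card_congr (Sym2.sortEquiv (α := Fin d)), Sym2.card, Fintype.card_fin]
  have e1 : Fintype.card (↥S ⊕ (Fin d ⊕ Unit)) = S.card + (d + 1) := by
    simp [Fintype.card_sum]
  have e2 : Fintype.card ({p : Fin d × Fin d // p.1 ≤ p.2} ⊕ (Fin d ⊕ (Fin d ⊕ (Unit ⊕ Unit)))) = (d+1).choose 2 + (d + (d + (1+1))) := by
    simp [Fintype.card_sum, hsub]
  have hfinal : S.card + d + 1 ≤ (d+1).choose 2 + (d + (d + (1 + 1))) := by omega
  have hch : S.card ≤ (d+2).choose 2 := by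
    have hp : (d+2).choose 2 = (d+1).choose 1 + (d+1).choose 2 := Nat.choose_succ_succ (d+1) 1
    rw [Nat.choose_one_right] at hp
    omega
  have hval : (d+2).choose 2 = (d+1)*(d+2)/2 := by
    have h21 : d + 2 - 1 = d + 1 := rfl
    rw [Nat.choose_two_right, h21, Nat.mul_comm]
  omega

/-- A two-distance set in ℝ^d (a finite set whose pairwise distances between
distinct points take at most two values) has at most `(d+1)(d+2)/2` points. -/
theorem two_distance_set_bound (d : ℕ) (S : Finset (EuclideanSpace ℝ (Fin d)))
    (a b : ℝ)
    (h : ∀ x ∈ S, ∀ y ∈ S, x ≠ y → dist x y = a ∨ dist x y = b) :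
    S.card ≤ (d + 1) * (d + 2) / 2 := by
  have hbound1 : 1 ≤ (d + 1) * (d + 2) / 2 := by
    rw [Nat.le_div_iff_mul_le (by norm_num : 0 < 2)]
    calc 1 * 2 = 1 * 2 := rfl
      _ ≤ (d+1) * (d+2) := Nat.mul_le_mul (by omega) (by omega)
  rcases Nat.eq_zero_or_pos d with hd | hd
  · subst hd
    have hcard : S.card ≤ 1 := by
      refine Finset.card_le_one.mpr fun x hx y hy => ?_
      exact PiLp.ext fun i => i.elim0
    exact hcard.trans hbound1
  by_cases hA : a = 0
  · by_cases hB : b = 0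
    · have hcard : S.card ≤ 1 := by
        refine Finset.card_le_one.mpr fun x hx y hy => ?_
        by_contra hxy
        rcases h x hx y hy hxy with h0 | h0
        · exact hxy (dist_eq_zero.mp (h0.trans hA))
        · exact hxy (dist_eq_zero.mp (h0.trans hB))
      exact hcard.trans hbound1
    · refine two_dist_main d hd S b b hB hB fun x hx y hy hxy => ?_
      rcases h x hx y hy hxy with h0 | h0
      · exact absurd (dist_eq_zero.mp (h0.trans hA)) hxy
      · exact Or.inl h0
  · by_cases hB : b = 0
    · refine two_dist_main d hd S a a hA hA fun x hx y hy hxy => ?_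
      rcases h x hx y hy hxy with h0 | h0
      · exact Or.inl h0
      · exact absurd (dist_eq_zero.mp (h0.trans hB)) hxy
    · exact two_dist_main d hd S a b hA hB h
end

section
/- Any set of unit vectors in ℝⁿ with pairwise inner products at most 0 has cardinality at most 2n. -/
open scoped RealInnerProductSpace
open Module

theorem aux_nonpos_inner : ∀ (n : ℕ) (E : Type) [NormedAddCommGroup E]
    [InnerProductSpace ℝ E] [FiniteDimensional ℝ E],
    finrank ℝ E ≤ n → ∀ s : Finset E, (∀ v ∈ s, ‖v‖ = 1) →
    (∀ v ∈ s, ∀ w ∈ s, v ≠ w → ⟪v, w⟫ ≤ 0) → s.card ≤ 2 * n := by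
  intro n
  induction n with
  | zero =>
    intro E _ _ _ hr s hnorm _
    have hsub : ∀ v : E, v = 0 := by
      rw [← finrank_zero_iff_forall_zero (K := ℝ)]; omega
    rcases s.eq_empty_or_nonempty with rfl | ⟨v, hv⟩
    · simp
    · have := hnorm v hv
      rw [hsub v] at this; simp at this
  | succ n ih =>
    intro E _ _ _ hr s hnorm hneg
    classical
    rcases s.eq_empty_or_nonempty with rfl | ⟨v, hv⟩
    · simp
    have hv1 : ‖v‖ = 1 := hnorm v hv
    have hv0 : v ≠ 0 := by intro h0; rw [h0] at hv1; simp at hv1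
    set K : Submodule ℝ E := (ℝ ∙ v)ᗮ with hK
    have hrK : finrank ℝ K ≤ n := by
      have h1 : finrank ℝ (ℝ ∙ v) + finrank ℝ K = finrank ℝ E :=
        Submodule.finrank_add_finrank_orthogonal _
      rw [finrank_span_singleton hv0] at h1
      omega
    -- projection
    set s' : Finset E := s \ {v, -v} with hs'
    have hmem : ∀ w ∈ s', w ∈ s ∧ w ≠ v ∧ w ≠ -v := by
      intro w hw
      simp only [hs', Finset.mem_sdiff, Finset.mem_insert, Finset.mem_singleton] at hw
      tauto
    set p : E → E := fun w => w - ⟪w, v⟫ • v with hp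
    have hpK : ∀ w, p w ∈ K := by
      intro w
      rw [hK, Submodule.mem_orthogonal]
      intro u hu
      rw [Submodule.mem_span_singleton] at hu
      obtain ⟨c, rfl⟩ := hu
      simp only [hp, inner_sub_right, real_inner_smul_left, real_inner_smul_right,
        real_inner_self_eq_norm_sq, hv1, real_inner_comm v w]
      ring_nf
    have hinner : ∀ w₁ w₂, ⟪p w₁, p w₂⟫ = ⟪w₁, w₂⟫ - ⟪w₁, v⟫ * ⟪w₂, v⟫ := by
      intro w₁ w₂
      simp only [hp, inner_sub_left, inner_sub_right, real_inner_smul_left,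
        real_inner_smul_right, real_inner_self_eq_norm_sq, hv1,
        real_inner_comm v w₁, real_inner_comm v w₂]
      ring
    have hip : ∀ w ∈ s', ⟪w, v⟫ ≤ 0 := fun w hw =>
      hneg w (hmem w hw).1 v hv (hmem w hw).2.1
    have hpne : ∀ w ∈ s', p w ≠ 0 := by
      intro w hw h0
      have hw' := hmem w hw
      have heq : w = ⟪w, v⟫ • v := by
        have := sub_eq_zero.mp h0
        simpa [hp] using sub_eq_zero.mp h0
      have hn : |⟪w, v⟫| = 1 := by
        have := hnorm w hw'.1
        rw [heq, norm_smul, hv1, mul_one] at this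
        simpa using this
      have : ⟪w, v⟫ = -1 := by
        rcases abs_eq (by norm_num : (0:ℝ) ≤ 1) |>.mp hn with h1 | h1
        · exfalso; have := hip w hw; linarith
        · exact h1
      rw [this] at heq
      exact hw'.2.2 (by simpa using heq)
    -- the map into K
    set u : E → K := fun w => ⟨(‖p w‖)⁻¹ • p w, K.smul_mem _ (hpK w)⟩ with hu
    have hun : ∀ w ∈ s', ‖u w‖ = 1 := by
      intro w hw
      have h0 := hpne w hw
      have : ‖u w‖ = ‖(‖p w‖)⁻¹ • p w‖ := rfl
      rw [this, norm_smul, norm_inv, norm_norm, inv_mul_cancel₀ (norm_ne_zero_iff.mpr h0)]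
    have hpin : ∀ w₁ ∈ s', ∀ w₂ ∈ s', w₁ ≠ w₂ → ⟪p w₁, p w₂⟫ ≤ 0 := by
      intro w₁ h1 w₂ h2 hne
      rw [hinner]
      have ha := hneg w₁ (hmem w₁ h1).1 w₂ (hmem w₂ h2).1 hne
      have hb := mul_nonneg (neg_nonneg.mpr (hip w₁ h1)) (neg_nonneg.mpr (hip w₂ h2))
      nlinarith
    have huin : ∀ w₁ ∈ s', ∀ w₂ ∈ s', w₁ ≠ w₂ → ⟪u w₁, u w₂⟫ ≤ 0 := by
      intro w₁ h1 w₂ h2 hne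
      have heq : ⟪u w₁, u w₂⟫ = (‖p w₁‖)⁻¹ * ((‖p w₂‖)⁻¹ * ⟪p w₁, p w₂⟫) := by
        simp only [hu, Submodule.coe_inner, real_inner_smul_left, real_inner_smul_right]
        ring
      rw [heq]
      have h1' : (0:ℝ) ≤ (‖p w₁‖)⁻¹ := by positivity
      have h2' : (0:ℝ) ≤ (‖p w₂‖)⁻¹ := by positivity
      have h3 := hpin w₁ h1 w₂ h2 hne
      have := mul_nonneg h1' h2'
      nlinarith
    have huinj : Set.InjOn u s' := by
      intro w₁ h1 w₂ h2 heq
      by_contra hne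
      have h01 := huin w₁ h1 w₂ h2 hne
      have hone : ⟪u w₁, u w₂⟫ = 1 := by
        rw [heq, real_inner_self_eq_norm_sq, hun w₂ h2]
        norm_num
      linarith
    have hcard' : s'.card ≤ 2 * n := by
      have hmain := ih K hrK (s'.image u) ?_ ?_
      · rwa [Finset.card_image_of_injOn huinj] at hmain
      · intro w hw
        obtain ⟨w', hw', rfl⟩ := Finset.mem_image.mp hw
        exact hun w' hw'
      · intro a ha b hb hne
        obtain ⟨a', ha', rfl⟩ := Finset.mem_image.mp ha
        obtain ⟨b', hb', rfl⟩ := Finset.mem_image.mp hb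
        exact huin a' ha' b' hb' (fun hh => hne (by rw [hh]))
    have h2 : s.card ≤ s'.card + ({v, -v} : Finset E).card :=
      Finset.card_le_card_sdiff_add_card
    have h3 : ({v, -v} : Finset E).card ≤ 2 := by
      apply le_trans (Finset.card_insert_le _ _)
      simp
    omega

/-- Any set of `N` distinct unit vectors in ℝⁿ with pairwise inner products at
most 0 has `N ≤ 2n`. -/
theorem nonpos_inner_card_bound (n N : ℕ)
    (x : Fin N → EuclideanSpace ℝ (Fin n)) (hinj : Function.Injective x)
    (hx : ∀ i, ‖x i‖ = 1)
    (h : ∀ i j, i ≠ j → ⟪x i, x j⟫ ≤ 0) :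
    N ≤ 2 * n := by
  classical
  have hcard : (Finset.univ.image x).card = N := by
    rw [Finset.card_image_of_injective _ hinj, Finset.card_univ, Fintype.card_fin]
  rw [← hcard]
  apply aux_nonpos_inner n (EuclideanSpace ℝ (Fin n))
  · simp [finrank_euclideanSpace_fin]
  · intro v hv
    obtain ⟨i, _, rfl⟩ := Finset.mem_image.mp hv
    exact hx i
  · intro v hv w hw hne
    obtain ⟨i, _, rfl⟩ := Finset.mem_image.mp hv
    obtain ⟨j, _, rfl⟩ := Finset.mem_image.mp hw
    exact h i j (fun hh => hne (by rw [hh]))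
end
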